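/- arXiv:1401.4754 — 6 statements merged into one kernel-verified Lean document; each statement's English description precedes it below -/
import Mathlib

section
/- Let H₁ and H₂ be real Hilbert spaces and H = H₁ × H₂ with the product inner product. Let T : H → H be a bounded self-adjoint linear operator, b ∈ H, c ∈ ℝ, and define the quadratic functional J(u) = (1/2)⟨Tu, u⟩ + ⟨b, u⟩ + c. Then a pair u* = (u₁*, u₂*) ∈ H is a saddle point of J, i.e. J(u₁*, u₂) ≤ J(u₁*, u₂*) ≤ J(u₁, u₂*) for all u₁ ∈ H₁ and u₂ ∈ H₂, if and only if the following three conditions hold: (a) Tu* + b = 0 (stationarity); (b) ⟨T(v, 0), (v, 0)⟩ ≥ 0 for all v ∈ H₁ (convexity in the first variable); (c) ⟨T(0, w), (0, w)⟩ ≤ 0 for all w ∈ H₂ (concavity in the second variable). -/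
open scoped RealInnerProductSpace

private lemma quad_aux (a β : ℝ) (h : ∀ t : ℝ, 0 ≤ a * t ^ 2 + β * t) :
    β = 0 ∧ 0 ≤ a := by
  have h1 := h 1
  have h2 := h (-1)
  have ha : 0 ≤ a := by nlinarith
  have h3 := h (-β / (a + 1))
  have hβ : β = 0 := by
    have hpos : 0 < a + 1 := by linarith
    have h4 : 0 ≤ (a * (-β / (a + 1)) ^ 2 + β * (-β / (a + 1))) * (a + 1) ^ 2 :=
      mul_nonneg h3 (sq_nonneg _)
    have h5 : (a * (-β / (a + 1)) ^ 2 + β * (-β / (a + 1))) * (a + 1) ^ 2 = -β ^ 2 := by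
      field_simp
      ring
    rw [h5] at h4
    nlinarith [sq_nonneg β]
  exact ⟨hβ, ha⟩

/-- Abstract Hilbert-space characterization of saddle points of a quadratic functional
`J(u) = (1/2)⟨Tu, u⟩ + ⟨b, u⟩ + c` on `H = H₁ × H₂` (with the product inner product),
`T` bounded self-adjoint: `(u₁, u₂)` is a saddle point iff `Tu* + b = 0`,
`⟨T(v,0), (v,0)⟩ ≥ 0` for all `v ∈ H₁`, and `⟨T(0,w), (0,w)⟩ ≤ 0` for all `w ∈ H₂`. -/
theorem quadratic_saddle_point_iff
    {H₁ H₂ : Type*}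
    [NormedAddCommGroup H₁] [InnerProductSpace ℝ H₁] [CompleteSpace H₁]
    [NormedAddCommGroup H₂] [InnerProductSpace ℝ H₂] [CompleteSpace H₂]
    (T : WithLp 2 (H₁ × H₂) →L[ℝ] WithLp 2 (H₁ × H₂))
    (hT : ∀ u v : WithLp 2 (H₁ × H₂), ⟪T u, v⟫ = ⟪u, T v⟫)
    (b : WithLp 2 (H₁ × H₂)) (c : ℝ) (J : WithLp 2 (H₁ × H₂) → ℝ)
    (hJ : ∀ u, J u = (1 / 2) * ⟪T u, u⟫ + ⟪b, u⟫ + c)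
    (u₁ : H₁) (u₂ : H₂) :
    (∀ (v₁ : H₁) (v₂ : H₂),
        J ((WithLp.equiv 2 (H₁ × H₂)).symm (u₁, v₂))
            ≤ J ((WithLp.equiv 2 (H₁ × H₂)).symm (u₁, u₂)) ∧
          J ((WithLp.equiv 2 (H₁ × H₂)).symm (u₁, u₂))
            ≤ J ((WithLp.equiv 2 (H₁ × H₂)).symm (v₁, u₂)))
      ↔ (T ((WithLp.equiv 2 (H₁ × H₂)).symm (u₁, u₂)) + b = 0 ∧
          (∀ v : H₁, 0 ≤ ⟪T ((WithLp.equiv 2 (H₁ × H₂)).symm (v, 0)),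
            (WithLp.equiv 2 (H₁ × H₂)).symm (v, 0)⟫) ∧
          (∀ w : H₂, ⟪T ((WithLp.equiv 2 (H₁ × H₂)).symm (0, w)),
            (WithLp.equiv 2 (H₁ × H₂)).symm (0, w)⟫ ≤ 0)) := by
  set e := (WithLp.equiv 2 (H₁ × H₂)).symm with he
  set u : WithLp 2 (H₁ × H₂) := e (u₁, u₂) with hu
  set g : WithLp 2 (H₁ × H₂) := T u + b with hg
  -- key expansion
  have key : ∀ h : WithLp 2 (H₁ × H₂),
      J (u + h) = J u + (1 / 2) * ⟪T h, h⟫ + ⟪g, h⟫ := by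
    intro h
    rw [hJ, hJ]
    have h1 : ⟪T h, u⟫ = ⟪T u, h⟫ := by rw [hT, real_inner_comm]
    rw [map_add]
    simp only [inner_add_left, inner_add_right, hg, h1]
    ring
  have hrow : ∀ v₁ : H₁, e (v₁, u₂) = u + e (v₁ - u₁, 0) := by
    intro v₁
    rw [hu, he, WithLp.equiv_symm_apply, ← WithLp.toLp_add]
    congr 1
    simp
  have hcol : ∀ v₂ : H₂, e (u₁, v₂) = u + e (0, v₂ - u₂) := by
    intro v₂
    rw [hu, he, WithLp.equiv_symm_apply, ← WithLp.toLp_add]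
    congr 1
    simp
  have hsmul1 : ∀ (t : ℝ) (v : H₁), e (t • v, 0) = t • e (v, 0) := by
    intro t v
    rw [he, WithLp.equiv_symm_apply, ← WithLp.toLp_smul]
    congr 1
    simp [Prod.smul_mk]
  have hsmul2 : ∀ (t : ℝ) (w : H₂), e (0, t • w) = t • e (0, w) := by
    intro t w
    rw [he, WithLp.equiv_symm_apply, ← WithLp.toLp_smul]
    congr 1
    simp [Prod.smul_mk]
  constructor
  · intro hS
    -- row condition
    have hrow' : ∀ v : H₁, ⟪g, e (v, 0)⟫ = 0 ∧ 0 ≤ ⟪T (e (v, 0)), e (v, 0)⟫ := by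
      intro v
      have hq : ∀ t : ℝ,
          0 ≤ (1 / 2) * ⟪T (e (v, 0)), e (v, 0)⟫ * t ^ 2 + ⟪g, e (v, 0)⟫ * t := by
        intro t
        have := (hS (u₁ + t • v) u₂).2
        rw [hrow (u₁ + t • v)] at this
        have harg : (u₁ + t • v - u₁ : H₁) = t • v := by abel
        rw [harg, hsmul1, key] at this
        have hTs : ⟪T (t • e (v, 0)), t • e (v, 0)⟫
            = t ^ 2 * ⟪T (e (v, 0)), e (v, 0)⟫ := by
          rw [map_smul, real_inner_smul_left, real_inner_smul_right]; ring
        rw [hTs, real_inner_smul_right] at this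
        nlinarith
      obtain ⟨h1, h2⟩ := quad_aux _ _ hq
      exact ⟨h1, by linarith⟩
    have hcol' : ∀ w : H₂, ⟪g, e (0, w)⟫ = 0 ∧ ⟪T (e (0, w)), e (0, w)⟫ ≤ 0 := by
      intro w
      have hq : ∀ t : ℝ,
          0 ≤ -((1 / 2) * ⟪T (e (0, w)), e (0, w)⟫) * t ^ 2 + (-⟪g, e (0, w)⟫) * t := by
        intro t
        have := (hS u₁ (u₂ + t • w)).1
        rw [hcol (u₂ + t • w)] at this
        have harg : (u₂ + t • w - u₂ : H₂) = t • w := by abel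
        rw [harg, hsmul2, key] at this
        have hTs : ⟪T (t • e (0, w)), t • e (0, w)⟫
            = t ^ 2 * ⟪T (e (0, w)), e (0, w)⟫ := by
          rw [map_smul, real_inner_smul_left, real_inner_smul_right]; ring
        rw [hTs, real_inner_smul_right] at this
        nlinarith
      obtain ⟨h1, h2⟩ := quad_aux _ _ hq
      refine ⟨by linarith, by linarith⟩
    have hg0 : g = 0 := by
      have hsplit : ∀ x : WithLp 2 (H₁ × H₂), ⟪g, x⟫ = 0 := by
        intro x
        have hx : x = e (x.fst, 0) + e (0, x.snd) := by
          rw [he, WithLp.equiv_symm_apply, ← WithLp.toLp_add]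
          have : ((x.fst, 0) + (0, x.snd) : H₁ × H₂) = (x.fst, x.snd) := by simp
          rw [this]
          rfl
        rw [hx, inner_add_right, (hrow' x.fst).1, (hcol' x.snd).1, add_zero]
      have := hsplit g
      rw [real_inner_self_eq_norm_sq] at this
      have : ‖g‖ = 0 := by nlinarith [norm_nonneg g]
      simpa using this
    refine ⟨hg0, fun v => (hrow' v).2, fun w => (hcol' w).2⟩
  · rintro ⟨hst, hpos, hneg⟩
    have hg0 : g = 0 := by rw [hg]; exact hst
    intro v₁ v₂
    constructor
    · rw [hcol v₂, key, hg0, inner_zero_left, add_zero]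
      have := hneg (v₂ - u₂)
      linarith
    · rw [hrow v₁, key, hg0, inner_zero_left, add_zero]
      have := hpos (v₁ - u₁)
      linarith
end

section
/- Let n, m ≥ 1 and 0 ≤ t < T. Let A ∈ L¹(t,T;ℝ^{n×n}), B ∈ L²(t,T;ℝ^{n×m}), C ∈ L²(t,T;ℝ^{n×n}), D ∈ L^∞(t,T;ℝ^{n×m}), Q ∈ L¹(t,T;𝕊ⁿ), S ∈ L²(t,T;ℝ^{m×n}), R ∈ L^∞(t,T;𝕊ᵐ), and G ∈ 𝕊ⁿ. Suppose P : [t,T] → ℝ^{n×n} is continuous and Θ ∈ L²(t,T;ℝ^{m×n}) are such that: P(s) = G + ∫ₛᵀ [P A + AᵀP + CᵀPC + (PB + CᵀPD + Sᵀ)Θ + Q] dr for all s ∈ [t,T], and BᵀP + DᵀPC + S + (R + DᵀPD)Θ = 0 for a.e. s ∈ [t,T]. Define M(s) = B(s)ᵀP(s) + D(s)ᵀP(s)C(s) + S(s) and R̂(s) = R(s) + D(s)ᵀP(s)D(s), and let R̂(s)† be the Moore–Penrose pseudoinverse of R̂(s). Then: (i) P(s)ᵀ = P(s) for all s ∈ [t,T];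 (ii) the range condition R̂(s)R̂(s)†M(s) = M(s) holds for a.e. s ∈ [t,T]; (iii) P solves the Riccati integral equation P(s) = G + ∫ₛᵀ [PA + AᵀP + CᵀPC + Q − MᵀR̂†M] dr for all s ∈ [t,T]; and (iv) the function s ↦ R̂(s)†M(s) belongs to L²(t,T;ℝ^{m×n}). -/
open Matrix MeasureTheory

attribute [local instance] Matrix.normedAddCommGroup Matrix.normedSpace

instance matPMS {p q : Type*} [Fintype p] [Fintype q] :
    TopologicalSpace.PseudoMetrizableSpace (Matrix p q ℝ) :=
  inferInstanceAs (TopologicalSpace.PseudoMetrizableSpace (p → q → ℝ))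

instance matCENorm {p q : Type*} [Fintype p] [Fintype q] :
    ContinuousENorm (Matrix p q ℝ) :=
  inferInstanceAs (ContinuousENorm (p → q → ℝ))

instance matENAM {p q : Type*} [Fintype p] [Fintype q] :
    ENormedAddCommMonoid (Matrix p q ℝ) :=
  inferInstanceAs (ENormedAddCommMonoid (p → q → ℝ))

lemma matrix_norm_mul_le {l k j : Type*} [Fintype l] [Fintype k] [Fintype j]
    (X : Matrix l k ℝ) (Y : Matrix k j ℝ) :
    ‖X * Y‖ ≤ (Fintype.card k : ℝ) * ‖X‖ * ‖Y‖ := by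
  rw [Matrix.norm_le_iff (by positivity)]
  intro i j'
  rw [Matrix.mul_apply]
  calc ‖∑ x, X i x * Y x j'‖ ≤ ∑ x : k, ‖X i x * Y x j'‖ := norm_sum_le _ _
    _ ≤ ∑ _x : k, ‖X‖ * ‖Y‖ := Finset.sum_le_sum fun x _ => by
        rw [norm_mul]
        exact mul_le_mul (Matrix.norm_entry_le_entrywise_sup_norm X)
          (Matrix.norm_entry_le_entrywise_sup_norm Y) (norm_nonneg _) (norm_nonneg _)
    _ = (Fintype.card k : ℝ) * ‖X‖ * ‖Y‖ := by
        rw [Finset.sum_const, Finset.card_univ, nsmul_eq_mul, mul_assoc]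

lemma aesm_matrix_mul {X : Type*} [MeasurableSpace X] {μ : Measure X}
    {l k j : Type*} [Fintype l] [Fintype k] [Fintype j]
    {f : X → Matrix l k ℝ} {g : X → Matrix k j ℝ}
    (hf : AEStronglyMeasurable f μ) (hg : AEStronglyMeasurable g μ) :
    AEStronglyMeasurable (fun x => f x * g x) μ :=
  (continuous_fst.matrix_mul continuous_snd).comp_aestronglyMeasurable (hf.prodMk hg)

lemma aesm_matrix_transpose {X : Type*} [MeasurableSpace X] {μ : Measure X}
    {l k : Type*} [Fintype l] [Fintype k]
    {f : X → Matrix l k ℝ} (hf : AEStronglyMeasurable f μ) :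
    AEStronglyMeasurable (fun x => (f x)ᵀ) μ :=
  (continuous_id.matrix_transpose).comp_aestronglyMeasurable hf

lemma integrableOn_mul_of_sq {E : Set ℝ} {f g : ℝ → ℝ}
    (hf : IntegrableOn (fun s => f s ^ 2) E)
    (hg : IntegrableOn (fun s => g s ^ 2) E)
    (hfm : AEStronglyMeasurable f (volume.restrict E))
    (hgm : AEStronglyMeasurable g (volume.restrict E)) :
    IntegrableOn (fun s => f s * g s) E := by
  refine (hf.add hg).mono' (hfm.mul hgm) (ae_of_all _ fun s => ?_)
  simp only [Pi.add_apply, Real.norm_eq_abs, abs_mul]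
  nlinarith [sq_nonneg (|f s| - |g s|), sq_abs (f s), sq_abs (g s), abs_nonneg (f s), abs_nonneg (g s)]

lemma norm_le_one_of_idem_symm {k : ℕ} (E : Matrix (Fin k) (Fin k) ℝ)
    (h1 : E * E = E) (h2 : Eᵀ = E) : ‖E‖ ≤ 1 := by
  rw [Matrix.norm_le_iff zero_le_one]
  intro i j
  have hsym : ∀ a b, E a b = E b a := fun a b => by
    nth_rewrite 1 [← h2]
    exact Matrix.transpose_apply E a b
  have hdiag : ∀ a : Fin k, E a a = ∑ x, E a x ^ 2 := by
    intro a
    conv_lhs => rw [← h1]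
    rw [Matrix.mul_apply]
    exact Finset.sum_congr rfl fun x _ => by rw [sq, hsym x a]
  have h3 : E i j ^ 2 ≤ E i i := by
    rw [hdiag i]
    exact Finset.single_le_sum (f := fun x => E i x ^ 2) (fun x _ => sq_nonneg _) (Finset.mem_univ j)
  have h4 : E i i ^ 2 ≤ E i i := by
    conv_rhs => rw [hdiag i]
    exact Finset.single_le_sum (f := fun x => E i x ^ 2) (fun x _ => sq_nonneg _) (Finset.mem_univ i)
  have h0 : 0 ≤ E i i := le_trans (sq_nonneg _) h3
  have h5 : E i i ≤ 1 := by nlinarith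
  rw [Real.norm_eq_abs]
  nlinarith [sq_abs (E i j), abs_nonneg (E i j)]

noncomputable def tCLM (n : ℕ) :
    Matrix (Fin n) (Fin n) ℝ →L[ℝ] Matrix (Fin n) (Fin n) ℝ :=
  LinearMap.mkContinuous
    { toFun := fun X => Xᵀ
      map_add' := fun X Y => Matrix.transpose_add X Y
      map_smul' := fun c X => Matrix.transpose_smul c X } 1
    (fun X => by rw [one_mul]; exact le_of_eq (Matrix.norm_transpose X))

@[simp] lemma tCLM_apply {n : ℕ} (X : Matrix (Fin n) (Fin n) ℝ) : tCLM n X = Xᵀ := rfl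

lemma gronwall_zero (t T : ℝ) (htT : t ≤ T) (u g : ℝ → ℝ)
    (hu : ContinuousOn u (Set.Icc t T))
    (hu0 : ∀ s ∈ Set.Icc t T, 0 ≤ u s)
    (hgu : IntegrableOn (fun r => g r * u r) (Set.Icc t T))
    (hg : IntegrableOn g (Set.Icc t T))
    (hg0 : ∀ s, 0 ≤ g s)
    (hineq : ∀ s ∈ Set.Icc t T, u s ≤ ∫ r in s..T, g r * u r) :
    ∀ s ∈ Set.Icc t T, u s = 0 := by
  have hii : ∀ a b, a ∈ Set.Icc t T → b ∈ Set.Icc t T →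
      IntervalIntegrable (fun r => g r * u r) volume a b := by
    intro a b ha hb
    refine (hgu.mono_set ?_).intervalIntegrable
    rw [← Set.uIcc_of_le htT]
    exact Set.uIcc_subset_uIcc (by rw [Set.uIcc_of_le htT]; exact ha)
      (by rw [Set.uIcc_of_le htT]; exact hb)
  have hgi : ∀ a b, a ∈ Set.Icc t T → b ∈ Set.Icc t T →
      IntervalIntegrable g volume a b := by
    intro a b ha hb
    refine (hg.mono_set ?_).intervalIntegrable
    rw [← Set.uIcc_of_le htT]
    exact Set.uIcc_subset_uIcc (by rw [Set.uIcc_of_le htT]; exact ha)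
      (by rw [Set.uIcc_of_le htT]; exact hb)
  set Z : Set ℝ := {s | s ∈ Set.Icc t T ∧ ∀ r ∈ Set.Icc s T, u r = 0} with hZdef
  have hTT : T ∈ Set.Icc t T := ⟨htT, le_refl T⟩
  have htt : t ∈ Set.Icc t T := ⟨le_refl t, htT⟩
  have hTZ : T ∈ Z := by
    have hUT : u T = 0 := by
      have h1 := hineq T hTT
      rw [intervalIntegral.integral_same] at h1
      exact le_antisymm h1 (hu0 T hTT)
    refine ⟨hTT, fun r hr => ?_⟩
    rw [le_antisymm hr.2 hr.1]
    exact hUT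
  have hZne : Z.Nonempty := ⟨T, hTZ⟩
  have hbdd : BddBelow Z := ⟨t, fun z hz => hz.1.1⟩
  set s₀ := sInf Z with hs₀def
  have hs0t : t ≤ s₀ := le_csInf hZne fun z hz => hz.1.1
  have hs0T : s₀ ≤ T := csInf_le hbdd hTZ
  have hs0mem : s₀ ∈ Set.Icc t T := ⟨hs0t, hs0T⟩
  have hIoc : ∀ r ∈ Set.Ioc s₀ T, u r = 0 := by
    intro r hr
    obtain ⟨z, hzZ, hz⟩ := (csInf_lt_iff hbdd hZne).mp hr.1
    exact hzZ.2 r ⟨hz.le, hr.2⟩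
  have hmem : s₀ ∈ Z := by
    refine ⟨hs0mem, fun r hr => ?_⟩
    rcases eq_or_lt_of_le hr.1 with h | h
    · rw [← h]
      have h1 := hineq s₀ ⟨hs0t, hs0T⟩
      have h2 : (∫ ρ in s₀..T, g ρ * u ρ) = 0 := by
        apply intervalIntegral.integral_zero_ae
        refine Filter.Eventually.of_forall fun x hx => ?_
        rw [Set.uIoc_of_le hs0T] at hx
        rw [hIoc x hx, mul_zero]
      rw [h2] at h1
      exact le_antisymm h1 (hu0 s₀ ⟨hs0t, hs0T⟩)
    · exact hIoc r ⟨h, hr.2⟩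
  -- conclude if s₀ = t
  rcases eq_or_lt_of_le hs0t with hts | hts
  · intro s hs
    exact hmem.2 s ⟨by rw [← hts]; exact hs.1, hs.2⟩
  -- otherwise derive a contradiction
  exfalso
  have hH : ContinuousOn (fun x => ∫ r in t..x, g r) (Set.Icc t T) := by
    have := intervalIntegral.continuousOn_primitive_interval
      (a := t) (b := T) (μ := volume) (f := g) (by rwa [Set.uIcc_of_le htT])
    rwa [Set.uIcc_of_le htT] at this
  have hcw : ContinuousWithinAt (fun x => ∫ r in t..x, g r) (Set.Icc t T) s₀ :=
    hH s₀ hs0mem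
  rw [Metric.continuousWithinAt_iff] at hcw
  obtain ⟨δ, hδ0, hδ⟩ := hcw (1/2) (by norm_num)
  set s := max t (s₀ - δ/2) with hsdef
  have hss0 : s < s₀ := max_lt hts (by linarith)
  have hsmem : s ∈ Set.Icc t T := ⟨le_max_left _ _, le_trans hss0.le hs0T⟩
  have hdist : dist s s₀ < δ := by
    rw [Real.dist_eq, abs_of_nonpos (by linarith)]
    have : s₀ - δ/2 ≤ s := le_max_right _ _
    linarith
  have hsmall : (∫ r in s..s₀, g r) < 1/2 := by
    have h1 := hδ hsmem hdist
    rw [Real.dist_eq] at h1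
    have h2 : (∫ r in s..s₀, g r)
        = (∫ r in t..s₀, g r) - (∫ r in t..s, g r) := by
      rw [eq_sub_iff_add_eq, add_comm,
        intervalIntegral.integral_add_adjacent_intervals (hgi t s htt hsmem) (hgi s s₀ hsmem hs0mem)]
    have h3 : |(∫ r in t..s, g r) - (∫ r in t..s₀, g r)| < 1/2 := h1
    rw [h2]
    calc (∫ r in t..s₀, g r) - (∫ r in t..s, g r)
        ≤ |(∫ r in t..s₀, g r) - (∫ r in t..s, g r)| := le_abs_self _
      _ = |(∫ r in t..s, g r) - (∫ r in t..s₀, g r)| := abs_sub_comm _ _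
      _ < 1/2 := h3
  -- integral of g over subintervals of [s, s₀] is ≥ 0 and ≤ the one over [s,s₀]
  have hgnonneg : ∀ a b, a ∈ Set.Icc t T → b ∈ Set.Icc t T → a ≤ b →
      0 ≤ ∫ r in a..b, g r :=
    fun a b _ _ hab => intervalIntegral.integral_nonneg hab fun x _ => hg0 x
  -- maximum of u on [s, T]
  obtain ⟨r₀, hr₀mem, hr₀max⟩ := (isCompact_Icc (a := s) (b := T)).exists_isMaxOn
    ⟨s, le_refl s, hsmem.2⟩ (hu.mono (Set.Icc_subset_Icc hsmem.1 (le_refl T)))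
  set U := u r₀ with hUdef
  have hsub : Set.Icc s T ⊆ Set.Icc t T := Set.Icc_subset_Icc hsmem.1 (le_refl T)
  have hU0 : 0 ≤ U := hu0 r₀ (hsub hr₀mem)
  have key : ∀ r ∈ Set.Icc s T, u r ≤ 1/2 * U := by
    intro r hr
    by_cases hrs0 : s₀ ≤ r
    · rw [hmem.2 r ⟨hrs0, hr.2⟩]
      positivity
    · push_neg at hrs0
      have hrmem : r ∈ Set.Icc t T := hsub hr
      have h1 := hineq r hrmem
      have hsplit : (∫ ρ in r..T, g ρ * u ρ)
          = (∫ ρ in r..s₀, g ρ * u ρ) + ∫ ρ in s₀..T, g ρ * u ρ :=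
        (intervalIntegral.integral_add_adjacent_intervals
          (hii r s₀ hrmem hs0mem) (hii s₀ T hs0mem hTT)).symm
      have h2 : (∫ ρ in s₀..T, g ρ * u ρ) = 0 := by
        apply intervalIntegral.integral_zero_ae
        refine Filter.Eventually.of_forall fun x hx => ?_
        rw [Set.uIoc_of_le hs0T] at hx
        rw [hIoc x hx, mul_zero]
      have h3 : (∫ ρ in r..s₀, g ρ * u ρ) ≤ ∫ ρ in r..s₀, g ρ * U := by
        refine intervalIntegral.integral_mono_ae_restrict hrs0.le
          (hii r s₀ hrmem hs0mem) ((hgi r s₀ hrmem hs0mem).mul_const U) ?_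
        refine (ae_restrict_mem measurableSet_Icc).mono fun ρ hρ => ?_
        have hρmem : ρ ∈ Set.Icc s T := ⟨le_trans hr.1 hρ.1, le_trans hρ.2 hs0T⟩
        exact mul_le_mul_of_nonneg_left (hr₀max hρmem) (hg0 ρ)
      have h4 : (∫ ρ in r..s₀, g ρ * U) = (∫ ρ in r..s₀, g ρ) * U :=
        intervalIntegral.integral_mul_const U g
      have h5 : (∫ ρ in r..s₀, g ρ) ≤ 1/2 := by
        have e : (∫ ρ in s..s₀, g ρ)
            = (∫ ρ in s..r, g ρ) + ∫ ρ in r..s₀, g ρ :=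
          (intervalIntegral.integral_add_adjacent_intervals
            (hgi s r hsmem hrmem) (hgi r s₀ hrmem hs0mem)).symm
        have := hgnonneg s r hsmem hrmem hr.1
        linarith
      have h6 : (∫ ρ in r..s₀, g ρ) * U ≤ 1/2 * U :=
        mul_le_mul_of_nonneg_right h5 hU0
      rw [hsplit, h2, add_zero] at h1
      linarith
  have hcontr := key r₀ hr₀mem
  have hU00 : U = 0 := by linarith
  have : s ∈ Z := by
    refine ⟨hsmem, fun r hr => ?_⟩
    have := key r hr
    have := hu0 r (hsub hr)
    linarith
  have : s₀ ≤ s := csInf_le hbdd this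
  linarith


lemma mnorm_mul_le {n₁ n₂ n₃ : ℕ} {X : Matrix (Fin n₁) (Fin n₂) ℝ}
    {Y : Matrix (Fin n₂) (Fin n₃) ℝ} {a b : ℝ} (hX : ‖X‖ ≤ a) (hY : ‖Y‖ ≤ b) :
    ‖X * Y‖ ≤ (n₂ : ℝ) * a * b := by
  refine (matrix_norm_mul_le X Y).trans ?_
  simp only [Fintype.card_fin]
  rw [mul_assoc, mul_assoc]
  exact mul_le_mul_of_nonneg_left
    (mul_le_mul hX hY (norm_nonneg _) ((norm_nonneg _).trans hX)) (by positivity)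

/-- Deterministic core of the necessity part of Theorem 5.2: if a continuous `P` and an
`L²` gain `Θ` satisfy the Lyapunov-type linear integral equation together with the
stationarity constraint `BᵀP + DᵀPC + S + (R + DᵀPD)Θ = 0` a.e., then (i) `P` is
symmetric-valued, (ii) the range condition `R̂R̂†M = M` holds a.e., (iii) `P` solves the
Riccati integral equation, and (iv) `R̂†M ∈ L²`. -/
theorem closed_loop_gain_gives_regular_riccati_solution
    {n m : ℕ} (hn : 1 ≤ n) (hm : 1 ≤ m)
    (t T : ℝ) (ht : 0 ≤ t) (htT : t < T)
    (A : ℝ → Matrix (Fin n) (Fin n) ℝ) (B : ℝ → Matrix (Fin n) (Fin m) ℝ)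
    (C : ℝ → Matrix (Fin n) (Fin n) ℝ) (D : ℝ → Matrix (Fin n) (Fin m) ℝ)
    (Q : ℝ → Matrix (Fin n) (Fin n) ℝ) (S : ℝ → Matrix (Fin m) (Fin n) ℝ)
    (R : ℝ → Matrix (Fin m) (Fin m) ℝ) (G : Matrix (Fin n) (Fin n) ℝ)
    -- A ∈ L¹(t,T;ℝ^{n×n})
    (hAmeas : AEStronglyMeasurable A (volume.restrict (Set.Icc t T)))
    (hA : IntegrableOn (fun s => ‖A s‖) (Set.Icc t T))
    -- B ∈ L²(t,T;ℝ^{n×m})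
    (hBmeas : AEStronglyMeasurable B (volume.restrict (Set.Icc t T)))
    (hB : IntegrableOn (fun s => ‖B s‖ ^ 2) (Set.Icc t T))
    -- C ∈ L²(t,T;ℝ^{n×n})
    (hCmeas : AEStronglyMeasurable C (volume.restrict (Set.Icc t T)))
    (hC : IntegrableOn (fun s => ‖C s‖ ^ 2) (Set.Icc t T))
    -- D ∈ L^∞(t,T;ℝ^{n×m})
    (hDmeas : AEStronglyMeasurable D (volume.restrict (Set.Icc t T)))
    (hD : ∃ K : ℝ, ∀ᵐ s ∂volume.restrict (Set.Icc t T), ‖D s‖ ≤ K)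
    -- Q ∈ L¹(t,T;𝕊ⁿ)
    (hQmeas : AEStronglyMeasurable Q (volume.restrict (Set.Icc t T)))
    (hQ : IntegrableOn (fun s => ‖Q s‖) (Set.Icc t T))
    (hQsymm : ∀ᵐ s ∂volume.restrict (Set.Icc t T), (Q s)ᵀ = Q s)
    -- S ∈ L²(t,T;ℝ^{m×n})
    (hSmeas : AEStronglyMeasurable S (volume.restrict (Set.Icc t T)))
    (hS : IntegrableOn (fun s => ‖S s‖ ^ 2) (Set.Icc t T))
    -- R ∈ L^∞(t,T;𝕊ᵐ)
    (hRmeas : AEStronglyMeasurable R (volume.restrict (Set.Icc t T)))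
    (hR : ∃ K : ℝ, ∀ᵐ s ∂volume.restrict (Set.Icc t T), ‖R s‖ ≤ K)
    (hRsymm : ∀ᵐ s ∂volume.restrict (Set.Icc t T), (R s)ᵀ = R s)
    -- G ∈ 𝕊ⁿ
    (hG : Gᵀ = G)
    -- P continuous, Θ ∈ L²
    (P : ℝ → Matrix (Fin n) (Fin n) ℝ) (hPcont : ContinuousOn P (Set.Icc t T))
    (Θ : ℝ → Matrix (Fin m) (Fin n) ℝ)
    (hΘmeas : AEStronglyMeasurable Θ (volume.restrict (Set.Icc t T)))
    (hΘ : IntegrableOn (fun s => ‖Θ s‖ ^ 2) (Set.Icc t T))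
    -- the Lyapunov-type linear integral equation
    (hPeq : ∀ s ∈ Set.Icc t T,
      P s = G + ∫ r in s..T,
        (P r * A r + (A r)ᵀ * P r + (C r)ᵀ * P r * C r
          + (P r * B r + (C r)ᵀ * P r * D r + (S r)ᵀ) * Θ r + Q r))
    -- the stationarity constraint
    (hstat : ∀ᵐ s ∂volume.restrict (Set.Icc t T),
      (B s)ᵀ * P s + (D s)ᵀ * P s * C s + S s
        + (R s + (D s)ᵀ * P s * D s) * Θ s = 0)
    -- R̂† : a measurable pointwise Moore–Penrose pseudoinverse of R̂ = R + DᵀPD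
    (Rdag : ℝ → Matrix (Fin m) (Fin m) ℝ)
    (hRdagmeas : AEStronglyMeasurable Rdag (volume.restrict (Set.Icc t T)))
    (hRdag : ∀ᵐ s ∂volume.restrict (Set.Icc t T),
      (R s + (D s)ᵀ * P s * D s) * Rdag s * (R s + (D s)ᵀ * P s * D s)
          = R s + (D s)ᵀ * P s * D s ∧
        Rdag s * (R s + (D s)ᵀ * P s * D s) * Rdag s = Rdag s ∧
        ((R s + (D s)ᵀ * P s * D s) * Rdag s)ᵀ = (R s + (D s)ᵀ * P s * D s) * Rdag s ∧
        (Rdag s * (R s + (D s)ᵀ * P s * D s))ᵀ = Rdag s * (R s + (D s)ᵀ * P s * D s)) :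
    -- (i) P is symmetric-valued
    (∀ s ∈ Set.Icc t T, (P s)ᵀ = P s) ∧
    -- (ii) range condition R̂R̂†M = M a.e.
    (∀ᵐ s ∂volume.restrict (Set.Icc t T),
      (R s + (D s)ᵀ * P s * D s) * Rdag s
          * ((B s)ᵀ * P s + (D s)ᵀ * P s * C s + S s)
        = (B s)ᵀ * P s + (D s)ᵀ * P s * C s + S s) ∧
    -- (iii) P solves the Riccati integral equation
    (∀ s ∈ Set.Icc t T,
      P s = G + ∫ r in s..T,
        (P r * A r + (A r)ᵀ * P r + (C r)ᵀ * P r * C r + Q r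
          - ((B r)ᵀ * P r + (D r)ᵀ * P r * C r + S r)ᵀ * Rdag r
              * ((B r)ᵀ * P r + (D r)ᵀ * P r * C r + S r))) ∧
    -- (iv) R̂†M ∈ L²(t,T;ℝ^{m×n})
    (AEStronglyMeasurable
        (fun s => Rdag s * ((B s)ᵀ * P s + (D s)ᵀ * P s * C s + S s))
        (volume.restrict (Set.Icc t T)) ∧
      IntegrableOn
        (fun s => ‖Rdag s * ((B s)ᵀ * P s + (D s)ᵀ * P s * C s + S s)‖ ^ 2)
        (Set.Icc t T)) := by
  -- basic setup
  have htT' : t ≤ T := htT.le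
  have hIccU : Set.uIcc t T = Set.Icc t T := Set.uIcc_of_le htT'
  obtain ⟨K₀, hK₀⟩ := hD
  set K : ℝ := |K₀| with hKdef
  have hK0 : 0 ≤ K := abs_nonneg _
  have hKD : ∀ᵐ s ∂volume.restrict (Set.Icc t T), ‖D s‖ ≤ K :=
    hK₀.mono fun s h => h.trans (le_abs_self _)
  obtain ⟨K₀, hK₀⟩ := hR
  set KR : ℝ := |K₀| with hKRdef
  have hKR : ∀ᵐ s ∂volume.restrict (Set.Icc t T), ‖R s‖ ≤ KR :=
    hK₀.mono fun s h => h.trans (le_abs_self _)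
  obtain ⟨Kp, hKp⟩ := isCompact_Icc.exists_bound_of_continuousOn hPcont
  have hKp0 : 0 ≤ Kp := le_trans (norm_nonneg _) (hKp t ⟨le_refl t, htT'⟩)
  have hPm : AEStronglyMeasurable P (volume.restrict (Set.Icc t T)) :=
    hPcont.aestronglyMeasurable measurableSet_Icc
  -- measurability of building blocks
  have hATm := aesm_matrix_transpose hAmeas
  have hBTm := aesm_matrix_transpose hBmeas
  have hCTm := aesm_matrix_transpose hCmeas
  have hDTm := aesm_matrix_transpose hDmeas
  have hSTm := aesm_matrix_transpose hSmeas
  have hΘTm := aesm_matrix_transpose hΘmeas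
  -- products of L² functions are integrable
  have hBΘ : IntegrableOn (fun r => ‖B r‖ * ‖Θ r‖) (Set.Icc t T) :=
    integrableOn_mul_of_sq hB hΘ hBmeas.norm hΘmeas.norm
  have hCΘ : IntegrableOn (fun r => ‖C r‖ * ‖Θ r‖) (Set.Icc t T) :=
    integrableOn_mul_of_sq hC hΘ hCmeas.norm hΘmeas.norm
  have hSΘ : IntegrableOn (fun r => ‖S r‖ * ‖Θ r‖) (Set.Icc t T) :=
    integrableOn_mul_of_sq hS hΘ hSmeas.norm hΘmeas.norm
  set f₁ : ℝ → Matrix (Fin n) (Fin n) ℝ := fun r =>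
    P r * A r + (A r)ᵀ * P r + (C r)ᵀ * P r * C r
      + (P r * B r + (C r)ᵀ * P r * D r + (S r)ᵀ) * Θ r + Q r with hf₁def
  have hPeq' : ∀ s ∈ Set.Icc t T, P s = G + ∫ r in s..T, f₁ r := hPeq
  have hf₁meas : AEStronglyMeasurable f₁ (volume.restrict (Set.Icc t T)) :=
    ((((aesm_matrix_mul hPm hAmeas).add (aesm_matrix_mul hATm hPm)).add
      (aesm_matrix_mul (aesm_matrix_mul hCTm hPm) hCmeas)).add
      (aesm_matrix_mul (((aesm_matrix_mul hPm hBmeas).add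
        (aesm_matrix_mul (aesm_matrix_mul hCTm hPm) hDmeas)).add hSTm) hΘmeas)).add hQmeas
  have hf₁int : IntegrableOn f₁ (Set.Icc t T) := by
    have hbnd : Integrable ((fun r => (2*(n:ℝ)*Kp)*‖A r‖) + ((fun r => ((n:ℝ)^2*Kp)*‖C r‖^2)
        + ((fun r => ((m:ℝ)*(n:ℝ)*Kp)*(‖B r‖*‖Θ r‖))
        + ((fun r => ((m:ℝ)*(n:ℝ)^2*Kp*K)*(‖C r‖*‖Θ r‖))
        + ((fun r => (m:ℝ)*(‖S r‖*‖Θ r‖)) + fun r => ‖Q r‖)))))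
        (volume.restrict (Set.Icc t T)) :=
      (hA.const_mul _).add ((hC.const_mul _).add ((hBΘ.const_mul _).add
        ((hCΘ.const_mul _).add ((hSΘ.const_mul _).add hQ))))
    refine hbnd.mono' hf₁meas ?_
    filter_upwards [hKD, ae_restrict_mem measurableSet_Icc] with r hDr hrmem
    simp only [Pi.add_apply]
    have hPr : ‖P r‖ ≤ Kp := hKp r hrmem
    have t1 : ‖P r * A r‖ ≤ (n:ℝ) * Kp * ‖A r‖ := mnorm_mul_le hPr le_rfl
    have t2 : ‖(A r)ᵀ * P r‖ ≤ (n:ℝ) * ‖A r‖ * Kp :=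
      mnorm_mul_le (Matrix.norm_transpose (A r)).le hPr
    have t3 : ‖(C r)ᵀ * P r * C r‖ ≤ (n:ℝ) * ((n:ℝ) * ‖C r‖ * Kp) * ‖C r‖ :=
      mnorm_mul_le (mnorm_mul_le (Matrix.norm_transpose (C r)).le hPr) le_rfl
    have t4 : ‖(P r * B r + (C r)ᵀ * P r * D r + (S r)ᵀ) * Θ r‖
        ≤ (m:ℝ) * ((n:ℝ)*Kp*‖B r‖ + (n:ℝ)*((n:ℝ)*‖C r‖*Kp)*K + ‖S r‖) * ‖Θ r‖ := by
      refine mnorm_mul_le ?_ le_rfl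
      refine (norm_add_le _ _).trans ?_
      rw [Matrix.norm_transpose]
      refine add_le_add (le_trans (norm_add_le _ _) (add_le_add ?_ ?_)) le_rfl
      · exact mnorm_mul_le hPr le_rfl
      · exact mnorm_mul_le (mnorm_mul_le (Matrix.norm_transpose (C r)).le hPr) hDr
    have hsum : ‖f₁ r‖ ≤ ‖P r * A r‖ + ‖(A r)ᵀ * P r‖ + ‖(C r)ᵀ * P r * C r‖
        + ‖(P r * B r + (C r)ᵀ * P r * D r + (S r)ᵀ) * Θ r‖ + ‖Q r‖ := by
      simp only [hf₁def]
      refine (norm_add_le _ _).trans (add_le_add ?_ le_rfl)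
      refine (norm_add_le _ _).trans (add_le_add ?_ le_rfl)
      refine (norm_add_le _ _).trans (add_le_add ?_ le_rfl)
      exact norm_add_le _ _
    calc ‖f₁ r‖ ≤ _ := hsum
      _ ≤ ((n:ℝ) * Kp * ‖A r‖) + ((n:ℝ) * ‖A r‖ * Kp) + ((n:ℝ) * ((n:ℝ) * ‖C r‖ * Kp) * ‖C r‖)
          + ((m:ℝ) * ((n:ℝ)*Kp*‖B r‖ + (n:ℝ)*((n:ℝ)*‖C r‖*Kp)*K + ‖S r‖) * ‖Θ r‖) + ‖Q r‖ :=
        add_le_add (add_le_add (add_le_add (add_le_add t1 t2) t3) t4) le_rfl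
      _ = _ := by ring
  have hf₁Tint : IntegrableOn (fun r => (f₁ r)ᵀ) (Set.Icc t T) :=
    hf₁int.norm.mono' (aesm_matrix_transpose hf₁meas)
      (Filter.Eventually.of_forall fun r => (Matrix.norm_transpose (f₁ r)).le)
  have hsubint : ∀ {h : ℝ → Matrix (Fin n) (Fin n) ℝ}, IntegrableOn h (Set.Icc t T) →
      ∀ s ∈ Set.Icc t T, IntervalIntegrable h volume s T := by
    intro h hint s hs
    refine (hint.mono_set ?_).intervalIntegrable
    rw [Set.uIcc_of_le hs.2]
    exact Set.Icc_subset_Icc hs.1 le_rfl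
  have hf₁ii := hsubint hf₁int
  have hf₁Tii := hsubint hf₁Tint
  have hΔeq : ∀ s ∈ Set.Icc t T, P s - (P s)ᵀ = ∫ r in s..T, (f₁ r - (f₁ r)ᵀ) := by
    intro s hs
    have h1 := hPeq' s hs
    have h3 : (∫ r in s..T, f₁ r)ᵀ = ∫ r in s..T, (f₁ r)ᵀ := by
      have h4 := (tCLM n).intervalIntegral_comp_comm (hf₁ii s hs)
      exact h4.symm
    rw [intervalIntegral.integral_sub (hf₁ii s hs) (hf₁Tii s hs), ← h3, h1,
      Matrix.transpose_add, hG]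
    abel
  -- the a.e. identity for the difference
  have hae : ∀ᵐ r ∂volume.restrict (Set.Icc t T), f₁ r - (f₁ r)ᵀ =
      (P r - (P r)ᵀ) * A r + (A r)ᵀ * (P r - (P r)ᵀ)
      + (C r)ᵀ * ((P r - (P r)ᵀ) * C r)
      + (Θ r)ᵀ * ((D r)ᵀ * ((P r - (P r)ᵀ) * (D r * Θ r)))
      + (P r - (P r)ᵀ) * (B r * Θ r)
      + (Θ r)ᵀ * ((B r)ᵀ * (P r - (P r)ᵀ))
      + (C r)ᵀ * ((P r - (P r)ᵀ) * (D r * Θ r))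
      + (Θ r)ᵀ * ((D r)ᵀ * ((P r - (P r)ᵀ) * C r)) := by
    filter_upwards [hstat, hQsymm, hRsymm] with r h1 hq hρ
    have h1' : S r + ((B r)ᵀ * P r + (D r)ᵀ * P r * C r
        + (R r + (D r)ᵀ * P r * D r) * Θ r) = 0 := by
      rw [← h1]; abel
    have hs' : S r = -((B r)ᵀ * P r + (D r)ᵀ * P r * C r
        + (R r + (D r)ᵀ * P r * D r) * Θ r) := eq_neg_of_add_eq_zero_left h1'
    simp only [hf₁def]
    rw [hs']
    simp only [Matrix.transpose_add, Matrix.transpose_mul, Matrix.transpose_neg,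
      Matrix.transpose_transpose, hq, hρ]
    simp only [Matrix.add_mul, Matrix.mul_add, Matrix.sub_mul, Matrix.mul_sub,
      Matrix.neg_mul, Matrix.mul_neg, neg_neg, Matrix.mul_assoc, neg_add_rev]
    abel
  -- the Gronwall bound function
  set gb : ℝ → ℝ := fun r => 2*(n:ℝ)*‖A r‖ + (n:ℝ)^2*‖C r‖^2 + (m:ℝ)^2*(n:ℝ)^2*K^2*‖Θ r‖^2
      + 2*((n:ℝ)*(m:ℝ))*(‖B r‖*‖Θ r‖) + 2*((n:ℝ)^2*(m:ℝ)*K)*(‖C r‖*‖Θ r‖) with hgbdef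
  have hgb0 : ∀ r, 0 ≤ gb r := fun r => by positivity
  have hgbint : IntegrableOn gb (Set.Icc t T) := by
    have : Integrable ((fun r => 2*(n:ℝ)*‖A r‖) + ((fun r => (n:ℝ)^2*‖C r‖^2)
        + ((fun r => (m:ℝ)^2*(n:ℝ)^2*K^2*‖Θ r‖^2)
        + ((fun r => 2*((n:ℝ)*(m:ℝ))*(‖B r‖*‖Θ r‖))
        + (fun r => 2*((n:ℝ)^2*(m:ℝ)*K)*(‖C r‖*‖Θ r‖))))))
        (volume.restrict (Set.Icc t T)) :=
      (hA.const_mul _).add ((hC.const_mul _).add ((hΘ.const_mul _).add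
        ((hBΘ.const_mul _).add (hCΘ.const_mul _))))
    refine this.congr ?_
    exact Filter.Eventually.of_forall fun r => by simp only [hgbdef, Pi.add_apply]; ring
  set u : ℝ → ℝ := fun s => ‖P s - (P s)ᵀ‖ with hudef
  have hucont : ContinuousOn u (Set.Icc t T) :=
    (hPcont.sub ((continuous_id.matrix_transpose).comp_continuousOn hPcont)).norm
  have hu0 : ∀ s ∈ Set.Icc t T, 0 ≤ u s := fun s _ => norm_nonneg _
  have huK : ∀ s ∈ Set.Icc t T, u s ≤ 2*Kp := by
    intro s hs
    calc u s ≤ ‖P s‖ + ‖(P s)ᵀ‖ := norm_sub_le _ _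
      _ = ‖P s‖ + ‖P s‖ := by rw [Matrix.norm_transpose]
      _ ≤ 2*Kp := by have := hKp s hs; linarith
  have hum : AEStronglyMeasurable u (volume.restrict (Set.Icc t T)) :=
    hucont.aestronglyMeasurable measurableSet_Icc
  have hgum : AEStronglyMeasurable (fun r => gb r * u r) (volume.restrict (Set.Icc t T)) := by
    refine AEStronglyMeasurable.mul ?_ hum
    exact (((((hAmeas.norm.const_mul _).add ((hCmeas.norm.pow 2).const_mul _)).add
      ((hΘmeas.norm.pow 2).const_mul _)).add
      ((hBmeas.norm.mul hΘmeas.norm).const_mul _)).add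
      ((hCmeas.norm.mul hΘmeas.norm).const_mul _))
  have hguint : IntegrableOn (fun r => gb r * u r) (Set.Icc t T) := by
    refine (hgbint.const_mul (2*Kp)).mono' hgum ?_
    filter_upwards [ae_restrict_mem measurableSet_Icc] with r hrmem
    rw [Real.norm_eq_abs, abs_of_nonneg (mul_nonneg (hgb0 r) (norm_nonneg _))]
    rw [mul_comm (2*Kp) (gb r)]
    exact mul_le_mul_of_nonneg_left (huK r hrmem) (hgb0 r)
  -- pointwise a.e. norm bound
  have hbound_ae : ∀ᵐ r ∂volume.restrict (Set.Icc t T),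
      ‖f₁ r - (f₁ r)ᵀ‖ ≤ gb r * u r := by
    filter_upwards [hae, hKD] with r hΦ hDr
    rw [hΦ]
    have nt : ∀ {k l : ℕ} (X : Matrix (Fin k) (Fin l) ℝ), ‖Xᵀ‖ ≤ ‖X‖ :=
      fun X => (Matrix.norm_transpose X).le
    have t1 : ‖(P r - (P r)ᵀ) * A r‖ ≤ (n:ℝ) * u r * ‖A r‖ := mnorm_mul_le le_rfl le_rfl
    have t2 : ‖(A r)ᵀ * (P r - (P r)ᵀ)‖ ≤ (n:ℝ) * ‖A r‖ * u r := mnorm_mul_le (nt _) le_rfl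
    have t3 : ‖(C r)ᵀ * ((P r - (P r)ᵀ) * C r)‖ ≤ (n:ℝ) * ‖C r‖ * ((n:ℝ) * u r * ‖C r‖) :=
      mnorm_mul_le (nt _) (mnorm_mul_le le_rfl le_rfl)
    have t4 : ‖(Θ r)ᵀ * ((D r)ᵀ * ((P r - (P r)ᵀ) * (D r * Θ r)))‖
        ≤ (m:ℝ) * ‖Θ r‖ * ((n:ℝ) * K * ((n:ℝ) * u r * ((m:ℝ) * K * ‖Θ r‖))) :=
      mnorm_mul_le (nt _) (mnorm_mul_le ((nt _).trans hDr)
        (mnorm_mul_le le_rfl (mnorm_mul_le hDr le_rfl)))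
    have t5 : ‖(P r - (P r)ᵀ) * (B r * Θ r)‖ ≤ (n:ℝ) * u r * ((m:ℝ) * ‖B r‖ * ‖Θ r‖) :=
      mnorm_mul_le le_rfl (mnorm_mul_le le_rfl le_rfl)
    have t6 : ‖(Θ r)ᵀ * ((B r)ᵀ * (P r - (P r)ᵀ))‖ ≤ (m:ℝ) * ‖Θ r‖ * ((n:ℝ) * ‖B r‖ * u r) :=
      mnorm_mul_le (nt _) (mnorm_mul_le (nt _) le_rfl)
    have t7 : ‖(C r)ᵀ * ((P r - (P r)ᵀ) * (D r * Θ r))‖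
        ≤ (n:ℝ) * ‖C r‖ * ((n:ℝ) * u r * ((m:ℝ) * K * ‖Θ r‖)) :=
      mnorm_mul_le (nt _) (mnorm_mul_le le_rfl (mnorm_mul_le hDr le_rfl))
    have t8 : ‖(Θ r)ᵀ * ((D r)ᵀ * ((P r - (P r)ᵀ) * C r))‖
        ≤ (m:ℝ) * ‖Θ r‖ * ((n:ℝ) * K * ((n:ℝ) * u r * ‖C r‖)) :=
      mnorm_mul_le (nt _) (mnorm_mul_le ((nt _).trans hDr)
        (mnorm_mul_le le_rfl le_rfl))
    calc ‖(P r - (P r)ᵀ) * A r + (A r)ᵀ * (P r - (P r)ᵀ)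
        + (C r)ᵀ * ((P r - (P r)ᵀ) * C r)
        + (Θ r)ᵀ * ((D r)ᵀ * ((P r - (P r)ᵀ) * (D r * Θ r)))
        + (P r - (P r)ᵀ) * (B r * Θ r)
        + (Θ r)ᵀ * ((B r)ᵀ * (P r - (P r)ᵀ))
        + (C r)ᵀ * ((P r - (P r)ᵀ) * (D r * Θ r))
        + (Θ r)ᵀ * ((D r)ᵀ * ((P r - (P r)ᵀ) * C r))‖
        ≤ ‖(P r - (P r)ᵀ) * A r‖ + ‖(A r)ᵀ * (P r - (P r)ᵀ)‖
        + ‖(C r)ᵀ * ((P r - (P r)ᵀ) * C r)‖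
        + ‖(Θ r)ᵀ * ((D r)ᵀ * ((P r - (P r)ᵀ) * (D r * Θ r)))‖
        + ‖(P r - (P r)ᵀ) * (B r * Θ r)‖
        + ‖(Θ r)ᵀ * ((B r)ᵀ * (P r - (P r)ᵀ))‖
        + ‖(C r)ᵀ * ((P r - (P r)ᵀ) * (D r * Θ r))‖
        + ‖(Θ r)ᵀ * ((D r)ᵀ * ((P r - (P r)ᵀ) * C r))‖ := by
          refine (norm_add_le _ _).trans (add_le_add ?_ le_rfl)
          refine (norm_add_le _ _).trans (add_le_add ?_ le_rfl)
          refine (norm_add_le _ _).trans (add_le_add ?_ le_rfl)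
          refine (norm_add_le _ _).trans (add_le_add ?_ le_rfl)
          refine (norm_add_le _ _).trans (add_le_add ?_ le_rfl)
          refine (norm_add_le _ _).trans (add_le_add ?_ le_rfl)
          exact norm_add_le _ _
      _ ≤ (n:ℝ) * u r * ‖A r‖ + (n:ℝ) * ‖A r‖ * u r
          + (n:ℝ) * ‖C r‖ * ((n:ℝ) * u r * ‖C r‖)
          + (m:ℝ) * ‖Θ r‖ * ((n:ℝ) * K * ((n:ℝ) * u r * ((m:ℝ) * K * ‖Θ r‖)))
          + (n:ℝ) * u r * ((m:ℝ) * ‖B r‖ * ‖Θ r‖)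
          + (m:ℝ) * ‖Θ r‖ * ((n:ℝ) * ‖B r‖ * u r)
          + (n:ℝ) * ‖C r‖ * ((n:ℝ) * u r * ((m:ℝ) * K * ‖Θ r‖))
          + (m:ℝ) * ‖Θ r‖ * ((n:ℝ) * K * ((n:ℝ) * u r * ‖C r‖)) :=
          add_le_add (add_le_add (add_le_add (add_le_add (add_le_add (add_le_add
            (add_le_add t1 t2) t3) t4) t5) t6) t7) t8
      _ = gb r * u r := by simp only [hgbdef]; ring
  -- the integral inequality and Gronwall
  have hineq : ∀ s ∈ Set.Icc t T, u s ≤ ∫ r in s..T, gb r * u r := by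
    intro s hs
    have hii : IntervalIntegrable (fun r => gb r * u r) volume s T := by
      refine (hguint.mono_set ?_).intervalIntegrable
      rw [Set.uIcc_of_le hs.2]
      exact Set.Icc_subset_Icc hs.1 le_rfl
    have hb : ∀ᵐ r ∂volume.restrict (Set.uIoc s T), ‖f₁ r - (f₁ r)ᵀ‖ ≤ gb r * u r := by
      refine ae_restrict_of_ae_restrict_of_subset ?_ hbound_ae
      rw [Set.uIoc_of_le hs.2]
      exact fun x hx => ⟨le_trans hs.1 hx.1.le, hx.2⟩
    have h := intervalIntegral.norm_integral_le_abs_of_norm_le hb hii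
    rw [← hΔeq s hs] at h
    refine h.trans (le_of_eq (abs_of_nonneg ?_))
    exact intervalIntegral.integral_nonneg hs.2
      (fun x _ => mul_nonneg (hgb0 x) (norm_nonneg _))
  have hPsymm : ∀ s ∈ Set.Icc t T, (P s)ᵀ = P s := by
    intro s hs
    have := gronwall_zero t T htT' u gb hucont hu0 hguint hgbint hgb0 hineq s hs
    rw [hudef] at this
    simp only [norm_eq_zero, sub_eq_zero] at this
    exact this.symm
  -- Part (ii): range condition
  have hrange : ∀ᵐ s ∂volume.restrict (Set.Icc t T),
      (R s + (D s)ᵀ * P s * D s) * Rdag s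
          * ((B s)ᵀ * P s + (D s)ᵀ * P s * C s + S s)
        = (B s)ᵀ * P s + (D s)ᵀ * P s * C s + S s := by
    filter_upwards [hstat, hRdag] with s h1 h2
    have hM' : (B s)ᵀ * P s + (D s)ᵀ * P s * C s + S s
        = -((R s + (D s)ᵀ * P s * D s) * Θ s) := eq_neg_of_add_eq_zero_left h1
    rw [hM', Matrix.mul_neg]
    rw [show (R s + (D s)ᵀ * P s * D s) * Rdag s * ((R s + (D s)ᵀ * P s * D s) * Θ s)
        = (R s + (D s)ᵀ * P s * D s) * Rdag s * (R s + (D s)ᵀ * P s * D s) * Θ s by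
      simp only [Matrix.mul_assoc]]
    rw [h2.1]
  -- Part (iii): the Riccati equation
  have haeq : ∀ᵐ r ∂volume.restrict (Set.Icc t T), f₁ r =
      P r * A r + (A r)ᵀ * P r + (C r)ᵀ * P r * C r + Q r
        - ((B r)ᵀ * P r + (D r)ᵀ * P r * C r + S r)ᵀ * Rdag r
            * ((B r)ᵀ * P r + (D r)ᵀ * P r * C r + S r) := by
    filter_upwards [hstat, hRdag, hRsymm, ae_restrict_mem measurableSet_Icc]
      with r h1 h2 h3 hrmem
    have hsym : (P r)ᵀ = P r := hPsymm r hrmem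
    have hM' : (B r)ᵀ * P r + (D r)ᵀ * P r * C r + S r
        = -((R r + (D r)ᵀ * P r * D r) * Θ r) := eq_neg_of_add_eq_zero_left h1
    have hRhsym : (R r + (D r)ᵀ * P r * D r)ᵀ = R r + (D r)ᵀ * P r * D r := by
      simp only [Matrix.transpose_add, Matrix.transpose_mul, Matrix.transpose_transpose,
        h3, hsym, Matrix.mul_assoc]
    have hMt : P r * B r + (C r)ᵀ * P r * D r + (S r)ᵀ
        = ((B r)ᵀ * P r + (D r)ᵀ * P r * C r + S r)ᵀ := by
      simp only [Matrix.transpose_add, Matrix.transpose_mul, Matrix.transpose_transpose,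
        hsym, Matrix.mul_assoc]
    have e1 : ((B r)ᵀ * P r + (D r)ᵀ * P r * C r + S r)ᵀ * Rdag r
          * ((B r)ᵀ * P r + (D r)ᵀ * P r * C r + S r)
        = -(((B r)ᵀ * P r + (D r)ᵀ * P r * C r + S r)ᵀ * Θ r) := by
      rw [hM']
      simp only [Matrix.transpose_neg, Matrix.transpose_mul, Matrix.neg_mul,
        Matrix.mul_neg, neg_neg]
      rw [hRhsym]
      rw [show (Θ r)ᵀ * (R r + (D r)ᵀ * P r * D r) * Rdag r
            * ((R r + (D r)ᵀ * P r * D r) * Θ r)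
          = (Θ r)ᵀ * ((R r + (D r)ᵀ * P r * D r) * Rdag r
            * (R r + (D r)ᵀ * P r * D r)) * Θ r by simp only [Matrix.mul_assoc]]
      rw [h2.1]
    simp only [hf₁def]
    rw [hMt, e1]
    abel
  have hriccati : ∀ s ∈ Set.Icc t T,
      P s = G + ∫ r in s..T,
        (P r * A r + (A r)ᵀ * P r + (C r)ᵀ * P r * C r + Q r
          - ((B r)ᵀ * P r + (D r)ᵀ * P r * C r + S r)ᵀ * Rdag r
              * ((B r)ᵀ * P r + (D r)ᵀ * P r * C r + S r)) := by
    intro s hs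
    rw [hPeq' s hs]
    congr 1
    apply intervalIntegral.integral_congr_ae
    have h' := ae_imp_of_ae_restrict haeq
    filter_upwards [h'] with x hx hxm
    rw [Set.uIoc_of_le hs.2] at hxm
    exact hx ⟨le_trans hs.1 hxm.1.le, hxm.2⟩
  -- Part (iv)
  have hmeas4 : AEStronglyMeasurable
      (fun s => Rdag s * ((B s)ᵀ * P s + (D s)ᵀ * P s * C s + S s))
      (volume.restrict (Set.Icc t T)) :=
    aesm_matrix_mul hRdagmeas (((aesm_matrix_mul hBTm hPm).add
      (aesm_matrix_mul (aesm_matrix_mul hDTm hPm) hCmeas)).add hSmeas)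
  have hint4 : IntegrableOn
      (fun s => ‖Rdag s * ((B s)ᵀ * P s + (D s)ᵀ * P s * C s + S s)‖ ^ 2)
      (Set.Icc t T) := by
    refine (hΘ.const_mul ((m:ℝ)^2)).mono'
      ((continuous_pow 2).comp_aestronglyMeasurable hmeas4.norm) ?_
    filter_upwards [hstat, hRdag] with s h1 h2
    have hM' : (B s)ᵀ * P s + (D s)ᵀ * P s * C s + S s
        = -((R s + (D s)ᵀ * P s * D s) * Θ s) := eq_neg_of_add_eq_zero_left h1
    have hEE : (Rdag s * (R s + (D s)ᵀ * P s * D s))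
        * (Rdag s * (R s + (D s)ᵀ * P s * D s))
        = Rdag s * (R s + (D s)ᵀ * P s * D s) := by
      rw [show (Rdag s * (R s + (D s)ᵀ * P s * D s))
          * (Rdag s * (R s + (D s)ᵀ * P s * D s))
          = (Rdag s * (R s + (D s)ᵀ * P s * D s) * Rdag s)
            * (R s + (D s)ᵀ * P s * D s) by simp only [Matrix.mul_assoc]]
      rw [h2.2.1]
    have hE : ‖Rdag s * (R s + (D s)ᵀ * P s * D s)‖ ≤ 1 :=
      norm_le_one_of_idem_symm _ hEE h2.2.2.2
    have hb : ‖Rdag s * ((B s)ᵀ * P s + (D s)ᵀ * P s * C s + S s)‖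
        ≤ (m:ℝ) * 1 * ‖Θ s‖ := by
      rw [hM']
      rw [show Rdag s * -((R s + (D s)ᵀ * P s * D s) * Θ s)
          = -((Rdag s * (R s + (D s)ᵀ * P s * D s)) * Θ s) by
        simp only [Matrix.mul_neg, Matrix.mul_assoc]]
      rw [norm_neg]
      exact mnorm_mul_le hE le_rfl
    rw [Real.norm_eq_abs, abs_of_nonneg (by positivity)]
    calc ‖Rdag s * ((B s)ᵀ * P s + (D s)ᵀ * P s * C s + S s)‖ ^ 2
        ≤ ((m:ℝ) * 1 * ‖Θ s‖) ^ 2 := by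
          exact pow_le_pow_left₀ (norm_nonneg _) hb 2
      _ = (m:ℝ)^2 * ‖Θ s‖^2 := by ring
  exact ⟨hPsymm, hrange, hriccati, hmeas4, hint4⟩
end

section
/- Let n, m ≥ 1 and 0 ≤ t < T. Let A ∈ L¹(t,T;ℝ^{n×n}), B ∈ L²(t,T;ℝ^{n×m}), C ∈ L²(t,T;ℝ^{n×n}), D ∈ L^∞(t,T;ℝ^{n×m}), Q ∈ L¹(t,T;𝕊ⁿ), S ∈ L²(t,T;ℝ^{m×n}), R ∈ L^∞(t,T;𝕊ᵐ), and G ∈ 𝕊ⁿ. Suppose P : [t,T] → 𝕊ⁿ is continuous and solves the Riccati integral equation P(s) = G + ∫ₛᵀ [PA + AᵀP + CᵀPC + Q − MᵀR̂†M] dr for all s ∈ [t,T], where M(s) = B(s)ᵀP(s) + D(s)ᵀP(s)C(s) + S(s), R̂(s) = R(s) + D(s)ᵀP(s)D(s), and R̂(s)† is the Moore–Penrose pseudoinverse of R̂(s); assume the range condition R̂R̂†M = M holds a.e. on [t,T] and that R̂†M ∈ L²(t,T;ℝ^{m×n}). Let θ ∈ L²(t,T;ℝ^{m×n}) be arbitrary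 and define Θ(s) = −R̂(s)†M(s) + (I − R̂(s)†R̂(s))θ(s). Then Θ ∈ L²(t,T;ℝ^{m×n}), the stationarity constraint BᵀP + DᵀPC + S + (R + DᵀPD)Θ = 0 holds a.e. on [t,T], and P satisfies the linear equation P(s) = G + ∫ₛᵀ [P A + AᵀP + CᵀPC + (PB + CᵀPD + Sᵀ)Θ + Q] dr for all s ∈ [t,T]. -/
open Matrix MeasureTheory

attribute [local instance] Matrix.normedAddCommGroup Matrix.normedSpace

section Helpers

lemma penrose_unique {m : ℕ} {M X Y : Matrix (Fin m) (Fin m) ℝ}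
    (hx1 : M * X * M = M) (hx2 : X * M * X = X)
    (hx3 : (M * X)ᵀ = M * X) (hx4 : (X * M)ᵀ = X * M)
    (hy1 : M * Y * M = M) (hy2 : Y * M * Y = Y)
    (hy3 : (M * Y)ᵀ = M * Y) (hy4 : (Y * M)ᵀ = Y * M) : X = Y := by
  have h1 : X = X * M * Y := by
    calc X = X * M * X := hx2.symm
    _ = X * (M * X)ᵀ := by rw [hx3, mul_assoc]
    _ = X * (M * Y * M * X)ᵀ := by rw [hy1]
    _ = X * ((M * Y) * (M * X))ᵀ := by rw [show M * Y * M * X = (M * Y) * (M * X) by noncomm_ring]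
    _ = X * (M * X)ᵀ * (M * Y)ᵀ := by rw [Matrix.transpose_mul, mul_assoc]
    _ = X * (M * X) * (M * Y) := by rw [hx3, hy3]
    _ = (X * M * X) * M * Y := by noncomm_ring
    _ = X * M * Y := by rw [hx2]
  have h2 : Y = X * M * Y := by
    calc Y = Y * M * Y := hy2.symm
    _ = (Y * M)ᵀ * Y := by rw [hy4]
    _ = (Y * (M * X * M))ᵀ * Y := by rw [hx1]
    _ = ((Y * M) * (X * M))ᵀ * Y := by rw [show Y * (M * X * M) = (Y * M) * (X * M) by noncomm_ring]
    _ = (X * M)ᵀ * (Y * M)ᵀ * Y := by rw [Matrix.transpose_mul]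
    _ = (X * M) * ((Y * M) * Y) := by rw [hx4, hy4, mul_assoc]
    _ = X * M * Y := by rw [show (Y * M) * Y = Y from hy2]
  rw [h1, ← h2]

lemma penrose_symm {m : ℕ} {M X : Matrix (Fin m) (Fin m) ℝ} (hM : Mᵀ = M)
    (hx1 : M * X * M = M) (hx2 : X * M * X = X)
    (hx3 : (M * X)ᵀ = M * X) (hx4 : (X * M)ᵀ = X * M) : Xᵀ = X := by
  refine penrose_unique ?_ ?_ ?_ ?_ hx1 hx2 hx3 hx4
  · calc M * Xᵀ * M = (Mᵀ * X * Mᵀ)ᵀ := by simp [Matrix.transpose_mul, Matrix.mul_assoc]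
    _ = M := by rw [hM, hx1, hM]
  · calc Xᵀ * M * Xᵀ = (X * Mᵀ * X)ᵀ := by simp [Matrix.transpose_mul, Matrix.mul_assoc]
    _ = Xᵀ := by rw [hM, hx2]
  · calc (M * Xᵀ)ᵀ = X * Mᵀ := by simp
    _ = (X * M)ᵀ := by rw [hM, hx4]
    _ = Mᵀ * Xᵀ := by simp
    _ = M * Xᵀ := by rw [hM]
  · calc (Xᵀ * M)ᵀ = Mᵀ * X := by simp
    _ = (M * X)ᵀ := by rw [hM, hx3]
    _ = Xᵀ * Mᵀ := by simp
    _ = Xᵀ * M := by rw [hM]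

/-- Entrywise sup norm of a symmetric idempotent is at most 1. -/
lemma proj_norm_le_one {m : ℕ} {Pp : Matrix (Fin m) (Fin m) ℝ}
    (hs : Ppᵀ = Pp) (hi : Pp * Pp = Pp) : ‖Pp‖ ≤ 1 := by
  have key : ∀ i j, Pp i j = ∑ k, Pp k i * Pp k j := by
    intro i j
    have h : Pp = Ppᵀ * Pp := by rw [hs, hi]
    conv_lhs => rw [h]
    simp [Matrix.mul_apply, Matrix.transpose_apply]
  have diag : ∀ i, 0 ≤ Pp i i ∧ Pp i i ≤ 1 := by
    intro i
    have h1 : Pp i i = ∑ k, (Pp k i) ^ 2 := by rw [key i i]; simp [sq]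
    have h0 : 0 ≤ Pp i i := by rw [h1]; positivity
    have h2 : (Pp i i) ^ 2 ≤ Pp i i := by
      conv_rhs => rw [h1]
      exact Finset.single_le_sum (fun k _ => sq_nonneg (Pp k i)) (Finset.mem_univ i)
    exact ⟨h0, by nlinarith⟩
  rw [Matrix.norm_le_iff zero_le_one]
  intro i j
  have hcs := Finset.sum_mul_sq_le_sq_mul_sq Finset.univ (fun k => Pp k i) (fun k => Pp k j)
  have hii : ∑ k, (Pp k i) ^ 2 = Pp i i := by rw [key i i]; simp [sq]
  have hjj : ∑ k, (Pp k j) ^ 2 = Pp j j := by rw [key j j]; simp [sq]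
  have hij : (Pp i j) ^ 2 ≤ Pp i i * Pp j j := by
    rw [key i j]; rw [hii, hjj] at hcs; exact hcs
  have := diag i; have := diag j
  rw [Real.norm_eq_abs, abs_le]
  constructor <;> nlinarith [hij]

/-- Entrywise sup norm of a matrix product. -/
lemma entrywise_norm_mul_le {k l p : ℕ} (X : Matrix (Fin k) (Fin l) ℝ)
    (Y : Matrix (Fin l) (Fin p) ℝ) : ‖X * Y‖ ≤ l * ‖X‖ * ‖Y‖ := by
  have h0 : (0:ℝ) ≤ l * ‖X‖ * ‖Y‖ := by positivity
  rw [Matrix.norm_le_iff h0]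
  intro i j
  rw [Matrix.mul_apply]
  calc ‖∑ c, X i c * Y c j‖ ≤ ∑ c, ‖X i c * Y c j‖ := norm_sum_le _ _
  _ ≤ ∑ _c : Fin l, ‖X‖ * ‖Y‖ := by
      refine Finset.sum_le_sum fun c _ => ?_
      rw [norm_mul]
      exact mul_le_mul (Matrix.norm_entry_le_entrywise_sup_norm X)
        (Matrix.norm_entry_le_entrywise_sup_norm Y) (norm_nonneg _) (norm_nonneg _)
  _ = l * ‖X‖ * ‖Y‖ := by simp [Finset.sum_const, mul_assoc]

lemma stationarity_alg {m n : ℕ} (M : Matrix (Fin m) (Fin n) ℝ)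
    (e X : Matrix (Fin m) (Fin m) ℝ) (th : Matrix (Fin m) (Fin n) ℝ)
    (h1 : e * X * e = e) (hr : e * X * M = M) :
    M + e * (-(X * M) + (1 - X * e) * th) = 0 := by
  have hr' : e * (X * M) = M := by rw [← Matrix.mul_assoc]; exact hr
  have h1' : e * (X * e) = e := by rw [← Matrix.mul_assoc]; exact h1
  simp only [Matrix.mul_add, Matrix.mul_neg, Matrix.sub_mul, Matrix.one_mul,
    Matrix.mul_sub, ← Matrix.mul_assoc]
  rw [Matrix.mul_assoc e X M, hr', Matrix.mul_assoc e X e, h1']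
  abel

lemma lyapunov_alg {m n : ℕ} (M : Matrix (Fin m) (Fin n) ℝ)
    (e X : Matrix (Fin m) (Fin m) ℝ) (th : Matrix (Fin m) (Fin n) ℝ)
    (hXs : Xᵀ = X) (hes : eᵀ = e) (hr : e * X * M = M) :
    Mᵀ * (-(X * M) + (1 - X * e) * th) = -(Mᵀ * X * M) := by
  have h5 : Mᵀ * X * e = Mᵀ := by
    have ht : (e * X * M)ᵀ = Mᵀ * X * e := by
      rw [Matrix.transpose_mul, Matrix.transpose_mul, hXs, hes, ← Matrix.mul_assoc]
    rw [← ht, hr]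
  simp only [Matrix.mul_add, Matrix.mul_neg, Matrix.sub_mul, Matrix.one_mul,
    Matrix.mul_sub, ← Matrix.mul_assoc]
  rw [h5]
  abel


lemma asm_matmul {k l p : ℕ} {μ : MeasureTheory.Measure ℝ}
    {f : ℝ → Matrix (Fin k) (Fin l) ℝ} {g : ℝ → Matrix (Fin l) (Fin p) ℝ}
    (hf : AEStronglyMeasurable f μ) (hg : AEStronglyMeasurable g μ) :
    AEStronglyMeasurable (fun s => f s * g s) μ :=
  (Continuous.matrix_mul continuous_fst continuous_snd).comp_aestronglyMeasurable
    (hf.prodMk hg)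

end Helpers

/-- Deterministic core of the sufficiency part of Theorem 5.2: from a regular solution `P`
of the Riccati integral equation (range condition a.e. and `R̂†M ∈ L²`), for any
`θ ∈ L²` the candidate gain `Θ = −R̂†M + (I − R̂†R̂)θ` belongs to `L²`, satisfies the
stationarity constraint `BᵀP + DᵀPC + S + (R + DᵀPD)Θ = 0` a.e., and `P` satisfies the
Lyapunov-type linear integral equation with this `Θ`. -/

theorem regular_riccati_solution_gives_closed_loop_gain
    {n m : ℕ} (hn : 1 ≤ n) (hm : 1 ≤ m)
    (t T : ℝ) (ht : 0 ≤ t) (htT : t < T)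
    (A : ℝ → Matrix (Fin n) (Fin n) ℝ) (B : ℝ → Matrix (Fin n) (Fin m) ℝ)
    (C : ℝ → Matrix (Fin n) (Fin n) ℝ) (D : ℝ → Matrix (Fin n) (Fin m) ℝ)
    (Q : ℝ → Matrix (Fin n) (Fin n) ℝ) (S : ℝ → Matrix (Fin m) (Fin n) ℝ)
    (R : ℝ → Matrix (Fin m) (Fin m) ℝ) (G : Matrix (Fin n) (Fin n) ℝ)
    -- A ∈ L¹(t,T;ℝ^{n×n})
    (hAmeas : AEStronglyMeasurable A (volume.restrict (Set.Icc t T)))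
    (hA : IntegrableOn (fun s => ‖A s‖) (Set.Icc t T))
    -- B ∈ L²(t,T;ℝ^{n×m})
    (hBmeas : AEStronglyMeasurable B (volume.restrict (Set.Icc t T)))
    (hB : IntegrableOn (fun s => ‖B s‖ ^ 2) (Set.Icc t T))
    -- C ∈ L²(t,T;ℝ^{n×n})
    (hCmeas : AEStronglyMeasurable C (volume.restrict (Set.Icc t T)))
    (hC : IntegrableOn (fun s => ‖C s‖ ^ 2) (Set.Icc t T))
    -- D ∈ L^∞(t,T;ℝ^{n×m})
    (hDmeas : AEStronglyMeasurable D (volume.restrict (Set.Icc t T)))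
    (hD : ∃ K : ℝ, ∀ᵐ s ∂volume.restrict (Set.Icc t T), ‖D s‖ ≤ K)
    -- Q ∈ L¹(t,T;𝕊ⁿ)
    (hQmeas : AEStronglyMeasurable Q (volume.restrict (Set.Icc t T)))
    (hQ : IntegrableOn (fun s => ‖Q s‖) (Set.Icc t T))
    (hQsymm : ∀ᵐ s ∂volume.restrict (Set.Icc t T), (Q s)ᵀ = Q s)
    -- S ∈ L²(t,T;ℝ^{m×n})
    (hSmeas : AEStronglyMeasurable S (volume.restrict (Set.Icc t T)))
    (hS : IntegrableOn (fun s => ‖S s‖ ^ 2) (Set.Icc t T))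
    -- R ∈ L^∞(t,T;𝕊ᵐ)
    (hRmeas : AEStronglyMeasurable R (volume.restrict (Set.Icc t T)))
    (hR : ∃ K : ℝ, ∀ᵐ s ∂volume.restrict (Set.Icc t T), ‖R s‖ ≤ K)
    (hRsymm : ∀ᵐ s ∂volume.restrict (Set.Icc t T), (R s)ᵀ = R s)
    -- G ∈ 𝕊ⁿ
    (hG : Gᵀ = G)
    -- P continuous with symmetric values
    (P : ℝ → Matrix (Fin n) (Fin n) ℝ) (hPcont : ContinuousOn P (Set.Icc t T))
    (hPsymm : ∀ s ∈ Set.Icc t T, (P s)ᵀ = P s)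
    -- R̂† : a measurable pointwise Moore–Penrose pseudoinverse of R̂ = R + DᵀPD
    (Rdag : ℝ → Matrix (Fin m) (Fin m) ℝ)
    (hRdagmeas : AEStronglyMeasurable Rdag (volume.restrict (Set.Icc t T)))
    (hRdag : ∀ᵐ s ∂volume.restrict (Set.Icc t T),
      (R s + (D s)ᵀ * P s * D s) * Rdag s * (R s + (D s)ᵀ * P s * D s)
          = R s + (D s)ᵀ * P s * D s ∧
        Rdag s * (R s + (D s)ᵀ * P s * D s) * Rdag s = Rdag s ∧
        ((R s + (D s)ᵀ * P s * D s) * Rdag s)ᵀ = (R s + (D s)ᵀ * P s * D s) * Rdag s ∧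
        (Rdag s * (R s + (D s)ᵀ * P s * D s))ᵀ = Rdag s * (R s + (D s)ᵀ * P s * D s))
    -- the Riccati integral equation
    (hPeq : ∀ s ∈ Set.Icc t T,
      P s = G + ∫ r in s..T,
        (P r * A r + (A r)ᵀ * P r + (C r)ᵀ * P r * C r + Q r
          - ((B r)ᵀ * P r + (D r)ᵀ * P r * C r + S r)ᵀ * Rdag r
              * ((B r)ᵀ * P r + (D r)ᵀ * P r * C r + S r)))
    -- the range condition R̂R̂†M = M a.e.
    (hrange : ∀ᵐ s ∂volume.restrict (Set.Icc t T),
      (R s + (D s)ᵀ * P s * D s) * Rdag s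
          * ((B s)ᵀ * P s + (D s)ᵀ * P s * C s + S s)
        = (B s)ᵀ * P s + (D s)ᵀ * P s * C s + S s)
    -- R̂†M ∈ L²(t,T;ℝ^{m×n})
    (hL2meas : AEStronglyMeasurable
      (fun s => Rdag s * ((B s)ᵀ * P s + (D s)ᵀ * P s * C s + S s))
      (volume.restrict (Set.Icc t T)))
    (hL2 : IntegrableOn
      (fun s => ‖Rdag s * ((B s)ᵀ * P s + (D s)ᵀ * P s * C s + S s)‖ ^ 2)
      (Set.Icc t T))
    -- an arbitrary θ ∈ L² and the candidate gain Θ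
    (θ : ℝ → Matrix (Fin m) (Fin n) ℝ)
    (hθmeas : AEStronglyMeasurable θ (volume.restrict (Set.Icc t T)))
    (hθ : IntegrableOn (fun s => ‖θ s‖ ^ 2) (Set.Icc t T))
    (Θ : ℝ → Matrix (Fin m) (Fin n) ℝ)
    (hΘdef : ∀ s, Θ s = -(Rdag s * ((B s)ᵀ * P s + (D s)ᵀ * P s * C s + S s))
      + (1 - Rdag s * (R s + (D s)ᵀ * P s * D s)) * θ s) :
    -- Θ ∈ L²(t,T;ℝ^{m×n})
    (AEStronglyMeasurable Θ (volume.restrict (Set.Icc t T)) ∧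
      IntegrableOn (fun s => ‖Θ s‖ ^ 2) (Set.Icc t T)) ∧
    -- the stationarity constraint a.e.
    (∀ᵐ s ∂volume.restrict (Set.Icc t T),
      (B s)ᵀ * P s + (D s)ᵀ * P s * C s + S s
        + (R s + (D s)ᵀ * P s * D s) * Θ s = 0) ∧
    -- the Lyapunov-type linear integral equation
    (∀ s ∈ Set.Icc t T,
      P s = G + ∫ r in s..T,
        (P r * A r + (A r)ᵀ * P r + (C r)ᵀ * P r * C r
          + (P r * B r + (C r)ᵀ * P r * D r + (S r)ᵀ) * Θ r + Q r)) := by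
  have hIcc : MeasurableSet (Set.Icc t T) := measurableSet_Icc
  have hPmeas : AEStronglyMeasurable P (volume.restrict (Set.Icc t T)) :=
    haveI : TopologicalSpace.PseudoMetrizableSpace (Matrix (Fin n) (Fin n) ℝ) :=
      (inferInstance : TopologicalSpace.PseudoMetrizableSpace (Fin n → Fin n → ℝ))
    hPcont.aestronglyMeasurable hIcc
  have hBT : AEStronglyMeasurable (fun s => (B s)ᵀ) (volume.restrict (Set.Icc t T)) :=
    (Continuous.matrix_transpose continuous_id).comp_aestronglyMeasurable hBmeas
  have hDT : AEStronglyMeasurable (fun s => (D s)ᵀ) (volume.restrict (Set.Icc t T)) :=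
    (Continuous.matrix_transpose continuous_id).comp_aestronglyMeasurable hDmeas
  have hRhatmeas : AEStronglyMeasurable (fun s => R s + (D s)ᵀ * P s * D s)
      (volume.restrict (Set.Icc t T)) :=
    hRmeas.add (asm_matmul (asm_matmul hDT hPmeas) hDmeas)
  -- measurability of Θ
  have hΘmeas : AEStronglyMeasurable Θ (volume.restrict (Set.Icc t T)) := by
    have : AEStronglyMeasurable
        (fun s => -(Rdag s * ((B s)ᵀ * P s + (D s)ᵀ * P s * C s + S s))
          + (1 - Rdag s * (R s + (D s)ᵀ * P s * D s)) * θ s)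
        (volume.restrict (Set.Icc t T)) :=
      hL2meas.neg.add (asm_matmul (aestronglyMeasurable_const.sub (asm_matmul hRdagmeas hRhatmeas)) hθmeas)
    exact this.congr (Filter.Eventually.of_forall fun s => (hΘdef s).symm)
  -- L² bound for Θ
  have hΘbound : ∀ᵐ s ∂volume.restrict (Set.Icc t T),
      ‖‖Θ s‖ ^ 2‖ ≤ 2 * ‖Rdag s * ((B s)ᵀ * P s + (D s)ᵀ * P s * C s + S s)‖ ^ 2
        + 2 * (m : ℝ) ^ 2 * ‖θ s‖ ^ 2 := by
    filter_upwards [hRdag] with s hp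
    obtain ⟨p1, p2, p3, p4⟩ := hp
    set e := R s + (D s)ᵀ * P s * D s with he
    set X := Rdag s with hX
    have hPis : (1 - X * e)ᵀ = 1 - X * e := by
      rw [Matrix.transpose_sub, Matrix.transpose_one, p4]
    have hPidem : (X * e) * (X * e) = X * e := by
      calc (X * e) * (X * e) = (X * e * X) * e := by noncomm_ring
      _ = X * e := by rw [p2]
    have hPii : (1 - X * e) * (1 - X * e) = 1 - X * e := by
      rw [sub_mul, one_mul, mul_sub, mul_one, hPidem]; abel
    have hn1 : ‖(1 : Matrix (Fin m) (Fin m) ℝ) - X * e‖ ≤ 1 := proj_norm_le_one hPis hPii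
    set Mm := (B s)ᵀ * P s + (D s)ᵀ * P s * C s + S s with hMm
    have h1 : ‖Θ s‖ ≤ ‖X * Mm‖ + (m : ℝ) * ‖θ s‖ := by
      rw [hΘdef s]
      calc ‖-(X * Mm) + (1 - X * e) * θ s‖
          ≤ ‖-(X * Mm)‖ + ‖(1 - X * e) * θ s‖ := norm_add_le _ _
      _ = ‖X * Mm‖ + ‖(1 - X * e) * θ s‖ := by rw [norm_neg]
      _ ≤ ‖X * Mm‖ + (m : ℝ) * ‖θ s‖ := by
          gcongr
          calc ‖(1 - X * e) * θ s‖ ≤ (m : ℝ) * ‖(1:Matrix (Fin m) (Fin m) ℝ) - X * e‖ * ‖θ s‖ :=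
              entrywise_norm_mul_le _ _
          _ ≤ (m : ℝ) * 1 * ‖θ s‖ := by
              have : (0:ℝ) ≤ (m:ℝ) := by positivity
              gcongr
          _ = (m : ℝ) * ‖θ s‖ := by ring
    rw [Real.norm_eq_abs, abs_of_nonneg (by positivity)]
    have hm0 : (0:ℝ) ≤ (m:ℝ) := by positivity
    nlinarith [sq_nonneg (‖X * Mm‖ - (m : ℝ) * ‖θ s‖), norm_nonneg (Θ s),
      norm_nonneg (X * Mm), norm_nonneg (θ s), h1]
  have hΘL2 : IntegrableOn (fun s => ‖Θ s‖ ^ 2) (Set.Icc t T) := by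
    have hg : IntegrableOn
        (fun s => 2 * ‖Rdag s * ((B s)ᵀ * P s + (D s)ᵀ * P s * C s + S s)‖ ^ 2
          + 2 * (m : ℝ) ^ 2 * ‖θ s‖ ^ 2) (Set.Icc t T) :=
      (hL2.const_mul 2).add (hθ.const_mul (2 * (m : ℝ) ^ 2))
    exact hg.mono' (hΘmeas.norm.pow 2) hΘbound
  -- stationarity
  have hstat : ∀ᵐ s ∂volume.restrict (Set.Icc t T),
      (B s)ᵀ * P s + (D s)ᵀ * P s * C s + S s
        + (R s + (D s)ᵀ * P s * D s) * Θ s = 0 := by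
    filter_upwards [hRdag, hrange] with s hp hr
    rw [hΘdef s]
    exact stationarity_alg _ _ _ _ hp.1 hr
  refine ⟨⟨hΘmeas, hΘL2⟩, hstat, ?_⟩
  -- the integrand identity a.e.
  have hkey : ∀ᵐ s ∂volume.restrict (Set.Icc t T),
      P s * A s + (A s)ᵀ * P s + (C s)ᵀ * P s * C s
          + (P s * B s + (C s)ᵀ * P s * D s + (S s)ᵀ) * Θ s + Q s
        = P s * A s + (A s)ᵀ * P s + (C s)ᵀ * P s * C s + Q s
          - ((B s)ᵀ * P s + (D s)ᵀ * P s * C s + S s)ᵀ * Rdag s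
              * ((B s)ᵀ * P s + (D s)ᵀ * P s * C s + S s) := by
    filter_upwards [hRdag, hrange, hRsymm, ae_restrict_mem hIcc] with s hp hr hRs hsmem
    obtain ⟨p1, p2, p3, p4⟩ := hp
    have hPs : (P s)ᵀ = P s := hPsymm s hsmem
    have hes : (R s + (D s)ᵀ * P s * D s)ᵀ = R s + (D s)ᵀ * P s * D s := by
      rw [Matrix.transpose_add, hRs]
      congr 1
      simp [Matrix.transpose_mul, hPs, Matrix.mul_assoc]
    have hXs : (Rdag s)ᵀ = Rdag s := penrose_symm hes p1 p2 p3 p4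
    have hMT : ((B s)ᵀ * P s + (D s)ᵀ * P s * C s + S s)ᵀ
        = P s * B s + (C s)ᵀ * P s * D s + (S s)ᵀ := by
      simp [Matrix.transpose_add, Matrix.transpose_mul, hPs, Matrix.mul_assoc]
    have hMΘ : ((B s)ᵀ * P s + (D s)ᵀ * P s * C s + S s)ᵀ * Θ s
        = -(((B s)ᵀ * P s + (D s)ᵀ * P s * C s + S s)ᵀ * Rdag s
            * ((B s)ᵀ * P s + (D s)ᵀ * P s * C s + S s)) := by
      rw [hΘdef s]
      have := lyapunov_alg ((B s)ᵀ * P s + (D s)ᵀ * P s * C s + S s)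
        (R s + (D s)ᵀ * P s * D s) (Rdag s) (θ s) hXs hes hr
      rw [this]
    rw [← hMT, hMΘ]
    abel
  -- the linear integral equation
  intro s hs
  rw [hPeq s hs]
  congr 1
  refine (intervalIntegral.integral_congr_ae ?_).symm
  have h' := (ae_restrict_iff' hIcc).mp hkey
  filter_upwards [h'] with r hr hrmem
  have hrIcc : r ∈ Set.Icc t T := by
    rw [Set.uIoc_of_le hs.2] at hrmem
    exact ⟨le_trans hs.1 hrmem.1.le, hrmem.2⟩
  exact hr hrIcc
end

section
/- Define R : [0,1] → ℝ by R(s) = s³/2 − s², and P : [0,1] → ℝ by P(s) = s². Then: (i) P(1) = 1 and, for every s ∈ (0,1], s³ − 2s² + 2P(s) = s³ ≠ 0 and P'(s) = 2P(s)²/(s³ − 2s² + 2P(s)); (ii) R(s) + P(s) = s³/2 ≥ 0 for all s ∈ [0,1]; (iii) nevertheless, the associated feedback gain Θ(s) = −(R(s) + P(s))⁻¹ P(s) = −2/s, s ∈ (0,1], is not square-integrable on (0,1), i.e. ∫₀¹ (2/s)² ds = +∞. -/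
open MeasureTheory

lemma example61_not_L2 :
    ∫⁻ s in Set.Ioo (0 : ℝ) 1, ENNReal.ofReal ((2 / s) ^ 2) = ⊤ := by
  by_contra h
  have hmeas : AEStronglyMeasurable (fun s : ℝ => (2 / s) ^ 2)
      (volume.restrict (Set.Ioo (0:ℝ) 1)) :=
    (((measurable_const.div measurable_id).pow_const 2).aestronglyMeasurable)
  have hnn : 0 ≤ᵐ[volume.restrict (Set.Ioo (0:ℝ) 1)] fun s : ℝ => (2 / s) ^ 2 :=
    Filter.Eventually.of_forall fun s => sq_nonneg _
  have hfi : HasFiniteIntegral (fun s : ℝ => (2 / s) ^ 2)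
      (volume.restrict (Set.Ioo (0:ℝ) 1)) := by
    rw [hasFiniteIntegral_iff_ofReal hnn]
    exact lt_top_iff_ne_top.2 h
  have hint : IntegrableOn (fun s : ℝ => (2 / s) ^ 2) (Set.Ioo (0:ℝ) 1) :=
    ⟨hmeas, hfi⟩
  have hint' : IntegrableOn (fun s : ℝ => s ^ (-2 : ℝ)) (Set.Ioo (0:ℝ) 1) := by
    refine IntegrableOn.congr_fun (g := fun s => s ^ (-2 : ℝ))
      (hint.const_mul (1/4 : ℝ)) ?_ measurableSet_Ioo
    · intro x hx
      show 1 / 4 * (2 / x) ^ 2 = x ^ (-2 : ℝ)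
      rw [show ((-2 : ℝ)) = -((2 : ℕ) : ℝ) by norm_num, Real.rpow_neg hx.1.le,
        Real.rpow_natCast]
      have hx0 : x ≠ 0 := ne_of_gt hx.1
      rw [div_pow]
      field_simp
      ring
  have := (intervalIntegral.integrableOn_Ioo_rpow_iff one_pos).1 hint'
  linarith

/-- Example 6.1: with `R(s) = s³/2 − s²`, the function `P(s) = s²` solves the Riccati
equation `P' = 2P²/(s³ − 2s² + 2P)`, `P(1) = 1`, with `R + P = s³/2 ≥ 0` on `[0,1]`;
nevertheless the feedback gain `Θ(s) = −(R(s)+P(s))⁻¹P(s) = −2/s` fails to be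
square-integrable on `(0,1)`. -/
theorem example61_riccati_solvable_but_gain_not_L2
    (R P : ℝ → ℝ)
    (hR : ∀ s, R s = s ^ 3 / 2 - s ^ 2)
    (hP : ∀ s, P s = s ^ 2) :
    -- (i) terminal value and the Riccati differential equation on (0,1]
    (P 1 = 1 ∧
      ∀ s ∈ Set.Ioc (0 : ℝ) 1,
        s ^ 3 - 2 * s ^ 2 + 2 * P s = s ^ 3 ∧ s ^ 3 ≠ 0 ∧
          HasDerivAt P (2 * (P s) ^ 2 / (s ^ 3 - 2 * s ^ 2 + 2 * P s)) s) ∧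
    -- (ii) R + P = s³/2 ≥ 0 on [0,1]
    (∀ s ∈ Set.Icc (0 : ℝ) 1, R s + P s = s ^ 3 / 2 ∧ 0 ≤ s ^ 3 / 2) ∧
    -- (iii) the feedback gain is −2/s and is not square-integrable on (0,1)
    ((∀ s ∈ Set.Ioc (0 : ℝ) 1, -(R s + P s)⁻¹ * P s = -2 / s) ∧
      ∫⁻ s in Set.Ioo (0 : ℝ) 1, ENNReal.ofReal ((2 / s) ^ 2) = ⊤) := by
  have hPfun : P = fun s => s ^ 2 := funext hP
  refine ⟨⟨by rw [hP]; norm_num, fun s hs => ?_⟩, fun s hs => ?_, fun s hs => ?_,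
    example61_not_L2⟩
  · have hs0 : s ≠ 0 := ne_of_gt hs.1
    refine ⟨by rw [hP]; ring, pow_ne_zero _ hs0, ?_⟩
    have hd : HasDerivAt P (2 * s) s := by
      rw [hPfun]
      simpa using (hasDerivAt_pow 2 s)
    convert hd using 1
    rw [hP]
    field_simp
    ring
    exact mul_inv_cancel₀ hs0
  · constructor
    · rw [hR, hP]; ring
    · have := hs.1
      positivity
  · have hs0 : s ≠ 0 := ne_of_gt hs.1
    rw [hR, hP]
    have : s ^ 3 / 2 - s ^ 2 + s ^ 2 = s ^ 3 / 2 := by ring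
    rw [this]
    field_simp
end

section
/- Let P : [0,1] → ℝ be continuous, differentiable on (0,1], with P(1) = 1, such that s³ − 2s² + 2P(s) ≠ 0 and P'(s) = 2P(s)²/(s³ − 2s² + 2P(s)) for every s ∈ (0,1]. Then P(s) = s² for all s ∈ [0,1]. -/
open Set Filter

/-- Uniqueness in Example 6.1: any continuous `P : [0,1] → ℝ` which is differentiable on
`(0,1]` with `P'(s) = 2P(s)²/(s³ − 2s² + 2P(s))` (the denominator being nonzero there) and
`P(1) = 1` must equal `s²` on `[0,1]`. -/
theorem example61_riccati_solution_unique
    (P : ℝ → ℝ)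
    (hPcont : ContinuousOn P (Set.Icc 0 1))
    (hP1 : P 1 = 1)
    (hne : ∀ s ∈ Set.Ioc (0 : ℝ) 1, s ^ 3 - 2 * s ^ 2 + 2 * P s ≠ 0)
    (hderiv : ∀ s ∈ Set.Ioc (0 : ℝ) 1,
      HasDerivWithinAt P (2 * (P s) ^ 2 / (s ^ 3 - 2 * s ^ 2 + 2 * P s))
        (Set.Ioc 0 1) s) :
    ∀ s ∈ Set.Icc (0 : ℝ) 1, P s = s ^ 2 := by
  have main : ∀ s₀ ∈ Set.Ioc (0:ℝ) 1, P s₀ = s₀ ^ 2 := by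
    intro s₀ hs₀
    obtain ⟨hs₀0, hs₀1⟩ := hs₀
    set c : ℝ → ℝ := fun s => (2 * (P s - s ^ 2) + 4 * s * (s - 1)) /
      (s ^ 3 - 2 * s ^ 2 + 2 * P s) with hc
    have hsub : Set.Icc s₀ 1 ⊆ Set.Ioc (0:ℝ) 1 := fun x hx =>
      ⟨lt_of_lt_of_le hs₀0 hx.1, hx.2⟩
    have hsub' : Set.Icc s₀ 1 ⊆ Set.Icc (0:ℝ) 1 := fun x hx =>
      ⟨le_of_lt (lt_of_lt_of_le hs₀0 hx.1), hx.2⟩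
    have hccont : ContinuousOn c (Set.Icc s₀ 1) := by
      apply ContinuousOn.div
      · exact (continuousOn_const.mul ((hPcont.mono hsub').sub (by fun_prop))).add (by fun_prop)
      · exact ((by fun_prop : ContinuousOn (fun s : ℝ => s ^ 3 - 2 * s ^ 2) _)).add
          (continuousOn_const.mul (hPcont.mono hsub'))
      · intro x hx; exact hne x (hsub hx)
    obtain ⟨K, hK⟩ := isCompact_Icc.exists_bound_of_continuousOn hccont
    set L : ℝ → ℝ := fun t => 1 + s₀ - t with hL
    have hLmaps : MapsTo L (Set.Icc s₀ 1) (Set.Icc s₀ 1) := by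
      intro t ht
      constructor
      · simp only [hL]; linarith [ht.2]
      · simp only [hL]; linarith [ht.1]
    set g : ℝ → ℝ := fun t => P (L t) - (L t) ^ 2 with hg
    have hgcont : ContinuousOn g (Set.Icc s₀ 1) := by
      apply ContinuousOn.sub
      · exact hPcont.comp (by fun_prop) (fun t ht => hsub' (hLmaps ht))
      · fun_prop
    have hgderiv : ∀ t ∈ Set.Ico s₀ 1,
        HasDerivWithinAt g (-(c (L t) * g t)) (Set.Ici t) t := by
      intro t ht
      have hsmem : L t ∈ Set.Ioc (0:ℝ) 1 := hsub (hLmaps ⟨ht.1, le_of_lt ht.2⟩)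
      have hLder : HasDerivWithinAt L (-1) (Set.Icc s₀ 1) t :=
        ((hasDerivAt_id t).const_sub (1 + s₀)).hasDerivWithinAt
      have hPder : HasDerivWithinAt (fun u => P (L u))
          ((2 * (P (L t)) ^ 2 / ((L t) ^ 3 - 2 * (L t) ^ 2 + 2 * P (L t))) * (-1))
          (Set.Icc s₀ 1) t := by
        exact HasDerivWithinAt.comp t (hderiv (L t) hsmem) hLder
          (fun u hu => hsub (hLmaps hu))
      have hsq : HasDerivWithinAt (fun u => (L u) ^ 2)
          ((2 : ℕ) * (L t) ^ (2 - 1) * (-1)) (Set.Icc s₀ 1) t := hLder.pow 2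
      have hD := hne (L t) hsmem
      have key : (2 * (P (L t)) ^ 2 / ((L t) ^ 3 - 2 * (L t) ^ 2 + 2 * P (L t))) * (-1)
          - ((2 : ℕ) * (L t) ^ (2 - 1) * (-1)) = -(c (L t) * g t) := by
        simp only [hc, hg]
        field_simp
        linear_combination (-2 * L t) * mul_inv_cancel₀ hD
      have := (hPder.sub hsq)
      rw [key] at this
      have hmem : Set.Icc s₀ 1 ∈ nhdsWithin t (Set.Ici t) :=
        Icc_mem_nhdsGE_of_mem ⟨ht.1, ht.2⟩
      exact this.mono_of_mem_nhdsWithin hmem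
    have hg0 : ‖g s₀‖ ≤ 0 := by
      simp only [hg, hL]
      norm_num [hP1]
    have hbound : ∀ t ∈ Set.Ico s₀ 1, ‖-(c (L t) * g t)‖ ≤ K * ‖g t‖ + 0 := by
      intro t ht
      rw [norm_neg, norm_mul, add_zero]
      exact mul_le_mul_of_nonneg_right (hK (L t) (hLmaps ⟨ht.1, le_of_lt ht.2⟩))
        (norm_nonneg _)
    have := norm_le_gronwallBound_of_norm_deriv_right_le hgcont hgderiv hg0 hbound 1
      ⟨hs₀1, le_refl 1⟩
    rw [gronwallBound_ε0] at this
    simp only [zero_mul] at this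
    have hg1 : g 1 = P s₀ - s₀ ^ 2 := by simp [hg, hL]
    have : ‖P s₀ - s₀ ^ 2‖ ≤ 0 := by rwa [hg1] at this
    have := le_antisymm this (norm_nonneg _)
    have := norm_eq_zero.mp this
    linarith [sub_eq_zero.mp this]
  intro s hs
  rcases eq_or_lt_of_le hs.1 with h0 | h0
  · subst h0
    have hclos : (0:ℝ) ∈ closure (Set.Ioc (0:ℝ) 1) := by
      rw [closure_Ioc (by norm_num : (0:ℝ) ≠ 1)]
      exact ⟨le_refl 0, by norm_num⟩
    haveI : (nhdsWithin (0:ℝ) (Set.Ioc 0 1)).NeBot :=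
      mem_closure_iff_nhdsWithin_neBot.mp hclos
    have h1 : Tendsto P (nhdsWithin (0:ℝ) (Set.Ioc 0 1)) (nhds (P 0)) :=
      (hPcont 0 ⟨le_refl 0, by norm_num⟩).mono_left
        (nhdsWithin_mono _ Set.Ioc_subset_Icc_self)
    have h2 : Tendsto P (nhdsWithin (0:ℝ) (Set.Ioc 0 1)) (nhds 0) := by
      have heq : ∀ᶠ x in nhdsWithin (0:ℝ) (Set.Ioc 0 1), P x = x ^ 2 :=
        eventually_nhdsWithin_of_forall main
      have h3 : Tendsto (fun x : ℝ => x ^ 2) (nhdsWithin (0:ℝ) (Set.Ioc 0 1)) (nhds 0) := by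
        have : Tendsto (fun x : ℝ => x ^ 2) (nhds 0) (nhds 0) := by
          have := (continuous_pow 2).tendsto (0:ℝ)
          simpa using this
        exact this.mono_left nhdsWithin_le_nhds
      exact Tendsto.congr' (heq.mono fun x hx => hx.symm) h3
    have := tendsto_nhds_unique h1 h2
    simp [this]
  · exact main s ⟨h0, hs.2⟩
end

section
/- Define R : [0,1] → ℝ by R(s) = (s − 3/2)² + 3/4, and define P₁, P₂ : [0,1] → ℝ by P₁(s) = −1 and P₂(s) = s − 2. Then P₁ and P₂ are two distinct solutions of the terminal-value Riccati problem Ṗ(s) = (P(s)² + 2P(s) + 1)/(R(s) + P(s)), P(1) = −1; namely: (i) P₁(1) = P₂(1) = −1; (ii) for every s ∈ [0,1), R(s) + P₁(s) = (s−1)(s−2) > 0 and P₁'(s) = 0 = (P₁(s)² + 2P₁(s) + 1)/(R(s) + P₁(s)); (iii) for every s ∈ [0,1), R(s) + P₂(s) = (s−1)² > 0 and P₂'(s) = 1 = (P₂(s)² + 2P₂(s) + 1)/(R(s) + P₂(s)); (iv) moreover R(s) + P₁(s) ≥ 0 and R(s) + P₂(s) ≥ 0 for all s ∈ [0,1], and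 P₁ ≠ P₂. In particular, the solution of this Riccati equation is not unique. -/
/-- Example 6.2: with `R(s) = (s − 3/2)² + 3/4`, both `P₁(s) = −1` and `P₂(s) = s − 2`
solve the terminal-value Riccati problem `P' = (P² + 2P + 1)/(R + P)`, `P(1) = −1`, with
`R + P ≥ 0` on `[0,1]`; in particular the solution of the Riccati equation is not
unique. -/
theorem example62_riccati_two_solutions
    (R P₁ P₂ : ℝ → ℝ)
    (hR : ∀ s, R s = (s - 3 / 2) ^ 2 + 3 / 4)
    (hP₁ : ∀ s, P₁ s = -1)
    (hP₂ : ∀ s, P₂ s = s - 2) :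
    -- (i) common terminal value
    (P₁ 1 = -1 ∧ P₂ 1 = -1) ∧
    -- (ii) P₁ solves the Riccati equation on [0,1)
    (∀ s ∈ Set.Ico (0 : ℝ) 1,
      R s + P₁ s = (s - 1) * (s - 2) ∧ 0 < (s - 1) * (s - 2) ∧
        HasDerivAt P₁ 0 s ∧
        (0 : ℝ) = ((P₁ s) ^ 2 + 2 * P₁ s + 1) / (R s + P₁ s)) ∧
    -- (iii) P₂ solves the Riccati equation on [0,1)
    (∀ s ∈ Set.Ico (0 : ℝ) 1,
      R s + P₂ s = (s - 1) ^ 2 ∧ 0 < (s - 1) ^ 2 ∧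
        HasDerivAt P₂ 1 s ∧
        (1 : ℝ) = ((P₂ s) ^ 2 + 2 * P₂ s + 1) / (R s + P₂ s)) ∧
    -- (iv) nonnegativity on [0,1] and the two solutions differ
    ((∀ s ∈ Set.Icc (0 : ℝ) 1, 0 ≤ R s + P₁ s ∧ 0 ≤ R s + P₂ s) ∧ P₁ ≠ P₂) := by
  refine ⟨⟨hP₁ 1, by rw [hP₂]; norm_num⟩, ?_, ?_, ?_, ?_⟩
  · intro s hs
    obtain ⟨h0, h1⟩ := hs
    refine ⟨by rw [hR, hP₁]; ring, by nlinarith, ?_, ?_⟩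
    · have : HasDerivAt (fun _ : ℝ => (-1 : ℝ)) 0 s := hasDerivAt_const s (-1)
      exact this.congr_of_eventuallyEq (Filter.Eventually.of_forall fun x => hP₁ x)
    · rw [hP₁]; norm_num
  · intro s hs
    obtain ⟨h0, h1⟩ := hs
    have hpos : (0:ℝ) < (s - 1) ^ 2 := by nlinarith
    refine ⟨by rw [hR, hP₂]; ring, hpos, ?_, ?_⟩
    · have : HasDerivAt (fun x : ℝ => x - 2) 1 s := by
        simpa using (hasDerivAt_id s).sub_const 2
      exact this.congr_of_eventuallyEq (Filter.Eventually.of_forall fun x => hP₂ x)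
    · rw [hR, hP₂]
      have h2 : ((s : ℝ) - 3 / 2) ^ 2 + 3 / 4 + (s - 2) = (s - 1) ^ 2 := by ring
      rw [h2]
      rw [eq_div_iff (ne_of_gt hpos)]
      ring
  · intro s hs
    obtain ⟨h0, h1⟩ := hs
    rw [hR, hP₁, hP₂]
    constructor <;> nlinarith
  · intro h
    have := congrFun h 0
    rw [hP₁ 0, hP₂ 0] at this
    norm_num at this
end
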